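/- arXiv:2304.07716 — 7 statements merged into one kernel-verified Lean document; each statement's English description precedes it below -/
import Mathlib

section
/- The polytope Q̄₁ is an extended formulation of the assignment polytope 𝒜ₙ; that is, the projection of Q̄₁ onto the w-variables equals 𝒜ₙ: π_w(Q̄₁) := { w ∈ ℝ^{m×m} : ∃ y, (w,y) ∈ Q̄₁ } = 𝒜ₙ. -/
/-- The assignment (Birkhoff) polytope `𝒜ₙ` (with `m = n - 1`): the set of
`m × m` doubly stochastic matrices.  Index `i : Fin m` stands for city `i+1`
(a city in `{1,…,m}`), index `r : Fin m` for stage/position `r+1`. -/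
def assignmentPolytope (m : ℕ) : Set (Fin m → Fin m → ℝ) :=
  {w | (∀ i, ∑ r, w i r = 1) ∧ (∀ r, ∑ i, w i r = 1) ∧ ∀ i r, 0 ≤ w i r}

/-- The polytope `Q̄₁`.  Cities are `Fin (m+1)` (city `0` is the depot, and
`i.succ : Fin (m+1)` is city `i+1` for `i : Fin m`).  The `y`-variables are
indexed by ordered pairs of distinct cities; the (nonexistent) diagonal
entries are pinned to `0`. -/
def Qbar1 (m : ℕ) :
    Set ((Fin m → Fin m → ℝ) × (Fin (m + 1) → Fin (m + 1) → ℝ)) :=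
  {p |
    p.1 ∈ assignmentPolytope m ∧
    (∀ i, p.2 i i = 0) ∧
    (∀ i r : Fin m, r.val = 0 → p.2 0 i.succ = p.1 i r) ∧
    (∀ i r : Fin m, r.val = m - 1 → p.2 i.succ 0 = p.1 i r) ∧
    (∀ i j r r' : Fin m, i ≠ j → r'.val = r.val + 1 →
      p.1 i r + p.1 j r' - p.2 i.succ j.succ ≤ 1) ∧
    (∑ i : Fin m, ∑ j : Fin m, if i = j then 0 else p.2 i.succ j.succ) = (m : ℝ) - 1 ∧
    (∀ i j, 0 ≤ p.2 i j)}

/-- The permutation matrix `ŵ` of a permutation `u` of `{1,…,m}`: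
`ŵ_{ir} = 1` iff city `i+1` is visited at stage `r+1`, i.e. iff `i = u r`. -/
def permMatrix (m : ℕ) (u : Equiv.Perm (Fin m)) : Fin m → Fin m → ℝ :=
  fun i r => if i = u r then 1 else 0

/-- The tour incidence vector `ȳ^u` of a permutation `u` of `{1,…,m}`:
`ȳ^u_{0,u(1)} = 1`, `ȳ^u_{u(m),0} = 1`, `ȳ^u_{u(q),u(q+1)} = 1` for
`q = 1,…,m−1`, and all other entries are `0`. -/
def tourVec (m : ℕ) (u : Equiv.Perm (Fin m)) : Fin (m + 1) → Fin (m + 1) → ℝ :=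
  fun a b =>
    if (∃ r : Fin m, r.val = 0 ∧ a = 0 ∧ b = (u r).succ) ∨
        (∃ r : Fin m, r.val = m - 1 ∧ a = (u r).succ ∧ b = 0) ∨
        (∃ q q' : Fin m, q'.val = q.val + 1 ∧ a = (u q).succ ∧ b = (u q').succ)
    then 1 else 0

/-- "The TSP polytope" `𝒫ₙ` (with `m = n - 1`): the convex hull of the tour
incidence vectors. -/
def tspPolytope (m : ℕ) : Set (Fin (m + 1) → Fin (m + 1) → ℝ) :=
  convexHull ℝ {y | ∃ u : Equiv.Perm (Fin m), y = tourVec m u}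

/-- The cost `d(0,u(1)) + Σ_{q=1}^{m−1} d(u(q),u(q+1)) + d(u(m),0)` of the TSP
tour `0 → u(1) → … → u(m) → 0` associated with a permutation `u` of `{1,…,m}`. -/
def tourCost (m : ℕ) (d : Fin (m + 1) → Fin (m + 1) → ℝ) (u : Equiv.Perm (Fin m)) : ℝ :=
  (∑ r : Fin m, if r.val = 0 then d 0 ((u r).succ) else 0) +
  (∑ q : Fin m, ∑ q' : Fin m, if q'.val = q.val + 1 then d ((u q).succ) ((u q').succ) else 0) +
  (∑ r : Fin m, if r.val = m - 1 then d ((u r).succ) 0 else 0)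

lemma count_succ_pairs (m : ℕ) (hm : 1 ≤ m) :
    (∑ r : Fin m, ∑ r' : Fin m, if r'.val = r.val + 1 then (1:ℝ) else 0) = (m : ℝ) - 1 := by
  have inner : ∀ r : Fin m,
      (∑ r' : Fin m, if r'.val = r.val + 1 then (1:ℝ) else 0)
        = if r.val + 1 < m then 1 else 0 := by
    intro r
    by_cases h : r.val + 1 < m
    · rw [if_pos h, Finset.sum_eq_single (⟨r.1 + 1, h⟩ : Fin m)]
      · simp
      · intro b _ hb
        rw [if_neg (fun hc => hb (Fin.ext hc))]
      · simp
    · rw [if_neg h]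
      refine Finset.sum_eq_zero fun r' _ => if_neg fun hc => h ?_
      rw [← hc]; exact r'.isLt
  rw [Finset.sum_congr rfl fun r _ => inner r,
    Fin.sum_univ_eq_sum_range (fun k => if k + 1 < m then (1:ℝ) else 0)]
  have h2 : ∀ k ∈ Finset.range m, (if k + 1 < m then (1:ℝ) else 0)
      = if k ∈ Finset.range (m - 1) then (1:ℝ) else 0 := by
    intro k _
    simp only [Finset.mem_range]
    congr 1
    simp only [eq_iff_iff]
    omega
  rw [Finset.sum_congr rfl h2, Finset.sum_ite_mem]
  have h3 : Finset.range m ∩ Finset.range (m - 1) = Finset.range (m - 1) := by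
    exact Finset.inter_eq_right.mpr (Finset.range_subset_range.mpr (by omega))
  rw [h3]
  simp only [Finset.sum_const, Finset.card_range, nsmul_eq_mul, mul_one]
  rw [Nat.cast_sub hm]
  simp

lemma key (m : ℕ) (hm : 2 ≤ m) :
    {w : Fin m → Fin m → ℝ | ∃ y : Fin (m + 1) → Fin (m + 1) → ℝ, (w, y) ∈ Qbar1 m}
      = assignmentPolytope m := by
  ext w
  simp only [Set.mem_setOf_eq]
  constructor
  · rintro ⟨y, h, -⟩; exact h
  · intro hw
    obtain ⟨hrow, hcol, hpos⟩ := hw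
    have hle1 : ∀ i r, w i r ≤ 1 := fun i r => by
      calc w i r ≤ ∑ r', w i r' :=
            Finset.single_le_sum (fun s _ => hpos i s) (Finset.mem_univ r)
        _ = 1 := hrow i
    set B : Fin m → Fin m → ℝ :=
      fun i j => ∑ r : Fin m, ∑ r' : Fin m,
        if r'.val = r.val + 1 then w i r * w j r' else 0 with hBdef
    have hBnn : ∀ i j, 0 ≤ B i j := by
      intro i j
      refine Finset.sum_nonneg fun r _ => Finset.sum_nonneg fun r' _ => ?_
      split
      · exact mul_nonneg (hpos i r) (hpos j r')
      · exact le_refl 0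
    set D : ℝ := ∑ i, B i i with hDdef
    have hDnn : 0 ≤ D := Finset.sum_nonneg fun i _ => hBnn i i
    set i0 : Fin m := ⟨0, by omega⟩ with hi0
    set j0 : Fin m := ⟨1, by omega⟩ with hj0
    have hi0j0 : i0 ≠ j0 := by
      intro h; rw [Fin.ext_iff] at h; simp [hi0, hj0] at h
    refine ⟨fun a b =>
      Fin.cases
        (Fin.cases 0 (fun j => w j ⟨0, by omega⟩) b)
        (fun i => Fin.cases (w i ⟨m - 1, by omega⟩)
          (fun j => if i = j then 0
            else B i j + if i = i0 ∧ j = j0 then D else 0) b) a,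
      ⟨hrow, hcol, hpos⟩, ?_, ?_, ?_, ?_, ?_, ?_⟩
    · -- diagonal zero
      intro a
      induction a using Fin.cases with
      | zero => simp
      | succ i => simp
    · -- y 0 i.succ
      intro i r hr
      have hre : r = ⟨0, by omega⟩ := Fin.ext hr
      rw [hre]
      simp
    · -- y i.succ 0
      intro i r hr
      have hre : r = ⟨m - 1, by omega⟩ := Fin.ext hr
      rw [hre]
      simp
    · -- inequality
      intro i j r r' hij hr'
      simp only [Fin.cases_succ, if_neg hij]
      have hBij : w i r * w j r' ≤ B i j := by
        have hnn : ∀ s : Fin m,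
            (0:ℝ) ≤ ∑ s' : Fin m, if s'.val = s.val + 1 then w i s * w j s' else 0 := by
          intro s
          refine Finset.sum_nonneg fun s' _ => ?_
          split
          · exact mul_nonneg (hpos i s) (hpos j s')
          · exact le_refl 0
        calc w i r * w j r'
            = (if r'.val = r.val + 1 then w i r * w j r' else 0) := (if_pos hr').symm
          _ ≤ ∑ s' : Fin m, if s'.val = r.val + 1 then w i r * w j s' else 0 := by
              refine Finset.single_le_sum
                (f := fun s' : Fin m => if s'.val = r.val + 1 then w i r * w j s' else 0)
                (fun s' _ => ?_) (Finset.mem_univ r')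
              split
              · exact mul_nonneg (hpos i r) (hpos j s')
              · exact le_refl 0
          _ ≤ B i j := Finset.single_le_sum (fun s _ => hnn s) (Finset.mem_univ r)
      have he : (0:ℝ) ≤ if i = i0 ∧ j = j0 then D else 0 := by
        split
        · exact hDnn
        · exact le_refl 0
      nlinarith [hle1 i r, hle1 j r', hpos i r, hpos j r']
    · -- the big sum
      simp only [Fin.cases_succ]
      have step1 : ∀ i j : Fin m,
          (if i = j then (0:ℝ)
            else (if i = j then 0 else B i j + if i = i0 ∧ j = j0 then D else 0))
          = B i j - (if i = j then B i j else 0)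
            + (if i = i0 ∧ j = j0 then D else 0) := by
        intro i j
        by_cases h1 : i = j
        · have h2 : ¬ (i = i0 ∧ j = j0) :=
            fun h2 => absurd (h2.1.symm.trans (h1.trans h2.2)) hi0j0
          rw [if_pos h1, if_pos h1, if_neg h2]
          ring
        · rw [if_neg h1, if_neg h1, if_neg h1]
          ring
      rw [Finset.sum_congr rfl fun i _ => Finset.sum_congr rfl fun j _ => step1 i j]
      have split1 : ∀ i : Fin m,
          (∑ j, (B i j - (if i = j then B i j else 0) + (if i = i0 ∧ j = j0 then D else 0)))
          = (∑ j, B i j) - B i i + (if i = i0 then D else 0) := by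
        intro i
        rw [Finset.sum_add_distrib, Finset.sum_sub_distrib]
        congr 1
        · congr 1
          rw [Finset.sum_ite_eq]
          simp
        · simp only [ite_and]
          rw [Finset.sum_ite_irrel]
          congr 1
          · rw [Finset.sum_ite_eq']
            simp
          · simp
      rw [Finset.sum_congr rfl fun i _ => split1 i]
      rw [Finset.sum_add_distrib, Finset.sum_sub_distrib]
      rw [Finset.sum_ite_eq']
      simp only [Finset.mem_univ, if_pos]
      have hT : (∑ i, ∑ j, B i j) = (m:ℝ) - 1 := by
        have hrow' : ∀ i : Fin m, (∑ j, B i j)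
            = ∑ r : Fin m, ∑ r' : Fin m,
                if r'.val = r.val + 1 then w i r * (∑ j, w j r') else 0 := by
          intro i
          rw [hBdef]
          rw [Finset.sum_comm]
          refine Finset.sum_congr rfl fun r _ => ?_
          rw [Finset.sum_comm]
          refine Finset.sum_congr rfl fun r' _ => ?_
          rw [Finset.sum_ite_irrel]
          rw [Finset.mul_sum]
          simp
        rw [Finset.sum_congr rfl fun i _ => hrow' i]
        rw [Finset.sum_comm]
        have : ∀ r : Fin m, (∑ i, ∑ r' : Fin m,
            if r'.val = r.val + 1 then w i r * (∑ j, w j r') else 0)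
            = ∑ r' : Fin m, if r'.val = r.val + 1 then (1:ℝ) else 0 := by
          intro r
          rw [Finset.sum_comm]
          refine Finset.sum_congr rfl fun r' _ => ?_
          rw [Finset.sum_ite_irrel]
          congr 1
          · rw [← Finset.sum_mul, hcol r, hcol r', one_mul]
          · simp
        rw [Finset.sum_congr rfl fun r _ => this r]
        exact count_succ_pairs m (by omega)
      rw [hT]
      ring
    · -- nonnegativity
      intro a b
      induction a using Fin.cases with
      | zero =>
        induction b using Fin.cases with
        | zero => simp
        | succ j => simp [hpos]
      | succ i =>
        induction b using Fin.cases with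
        | zero => simp [hpos]
        | succ j =>
          simp only [Fin.cases_succ]
          split
          · exact le_refl 0
          · have he : (0:ℝ) ≤ if i = i0 ∧ j = j0 then D else 0 := by
              split
              · exact hDnn
              · exact le_refl 0
            have := hBnn i j
            linarith

/-- The polytope `Q̄₁` is an extended formulation of the
assignment polytope `𝒜ₙ`: the projection of `Q̄₁` onto the `w`-variables
equals `𝒜ₙ`. -/
theorem Qbar1_isEF_of_assignmentPolytope (n : ℕ) (hn : 3 ≤ n) :
    {w : Fin (n - 1) → Fin (n - 1) → ℝ |
        ∃ y : Fin (n - 1 + 1) → Fin (n - 1 + 1) → ℝ, (w, y) ∈ Qbar1 (n - 1)} =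
      assignmentPolytope (n - 1) := by
  exact key (n - 1) (by omega)
end

section
/- The set { y with all entries in {0,1} : there exists w with all entries in {0,1} such that (w,y) ∈ Q̄₁ } equals the set { ȳ^u : u a permutation of {1,…,m} } of tour incidence vectors; consequently, the TSP polytope 𝒫ₙ equals the convex hull of { y ∈ {0,1}-vectors : ∃ w ∈ {0,1}-matrices with (w,y) ∈ Q̄₁ }. -/
open Finset

lemma sum_eq_one_unique {m : ℕ} (f : Fin m → ℝ) (h01 : ∀ i, f i = 0 ∨ f i = 1)
    (hs : ∑ i, f i = 1) : ∃! i, f i = 1 := by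
  have hex : ∃ i, f i = 1 := by
    by_contra h
    push_neg at h
    have hz : ∀ i, f i = 0 := fun i => (h01 i).resolve_right (h i)
    simp [hz] at hs
  obtain ⟨i, hi⟩ := hex
  refine ⟨i, hi, fun j hj => ?_⟩
  by_contra hne
  have h2 : (2:ℝ) ≤ ∑ k, f k := by
    calc (2:ℝ) = ∑ k ∈ ({j, i} : Finset (Fin m)), f k := by
          rw [Finset.sum_pair hne, hi, hj]; norm_num
    _ ≤ ∑ k, f k := Finset.sum_le_sum_of_subset_of_nonneg (subset_univ _)
        (fun k _ _ => by rcases h01 k with h|h <;> simp [h])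
  rw [hs] at h2; norm_num at h2

lemma tourVec_zero_zero {m : ℕ} (u : Equiv.Perm (Fin m)) : tourVec m u 0 0 = 0 := by
  unfold tourVec
  rw [if_neg]
  rintro ((⟨r, _, _, h⟩) | (⟨r, _, h, _⟩) | ⟨q, q', _, h, _⟩) <;>
    exact (Fin.succ_ne_zero _) h.symm

lemma tourVec_zero_succ {m : ℕ} (u : Equiv.Perm (Fin m)) (j : Fin m) :
    tourVec m u 0 j.succ = if (u.symm j).val = 0 then 1 else 0 := by
  unfold tourVec
  congr 1
  simp only [eq_iff_iff]
  constructor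
  · rintro ((⟨r, hr, _, h⟩) | (⟨r, _, h, _⟩) | ⟨q, q', _, h, _⟩)
    · rw [Fin.succ_inj] at h
      rw [h, Equiv.symm_apply_apply]; exact hr
    · exact absurd h.symm (Fin.succ_ne_zero _)
    · exact absurd h.symm (Fin.succ_ne_zero _)
  · intro h
    exact Or.inl ⟨u.symm j, h, trivial, by rw [Equiv.apply_symm_apply]⟩

lemma tourVec_succ_zero {m : ℕ} (u : Equiv.Perm (Fin m)) (i : Fin m) :
    tourVec m u i.succ 0 = if (u.symm i).val = m - 1 then 1 else 0 := by
  unfold tourVec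
  congr 1
  simp only [eq_iff_iff]
  constructor
  · rintro ((⟨r, _, h, _⟩) | (⟨r, hr, h, _⟩) | ⟨q, q', _, _, h⟩)
    · exact absurd h (Fin.succ_ne_zero _)
    · rw [Fin.succ_inj] at h
      rw [h, Equiv.symm_apply_apply]; exact hr
    · exact absurd h.symm (Fin.succ_ne_zero _)
  · intro h
    exact Or.inr (Or.inl ⟨u.symm i, h, by rw [Equiv.apply_symm_apply], trivial⟩)

lemma tourVec_succ_succ {m : ℕ} (u : Equiv.Perm (Fin m)) (i j : Fin m) :
    tourVec m u i.succ j.succ = if (u.symm j).val = (u.symm i).val + 1 then 1 else 0 := by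
  unfold tourVec
  congr 1
  simp only [eq_iff_iff]
  constructor
  · rintro ((⟨r, _, h, _⟩) | (⟨r, _, _, h⟩) | ⟨q, q', hqq, hi, hj⟩)
    · exact absurd h (Fin.succ_ne_zero _)
    · exact absurd h (Fin.succ_ne_zero _)
    · rw [Fin.succ_inj] at hi hj
      rw [hi, hj, Equiv.symm_apply_apply, Equiv.symm_apply_apply]; exact hqq
  · intro h
    exact Or.inr (Or.inr ⟨u.symm i, u.symm j, h,
      by rw [Equiv.apply_symm_apply], by rw [Equiv.apply_symm_apply]⟩)

lemma sum_G {m : ℕ} (hm : 1 ≤ m) :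
    ∑ q : Fin m, ∑ q' : Fin m, (if q'.val = q.val + 1 then (1:ℝ) else 0) = m - 1 := by
  have hinner : ∀ q : Fin m, (∑ q' : Fin m, if q'.val = q.val + 1 then (1:ℝ) else 0)
      = if q.val + 1 < m then 1 else 0 := by
    intro q
    by_cases h : q.val + 1 < m
    · rw [if_pos h]
      calc (∑ q' : Fin m, if q'.val = q.val + 1 then (1:ℝ) else 0)
          = ∑ q' : Fin m, if q' = (⟨q.val + 1, h⟩ : Fin m) then (1:ℝ) else 0 := by
            apply Finset.sum_congr rfl; intro x _
            congr 1
            simp [Fin.ext_iff]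
        _ = 1 := by simp
    · rw [if_neg h]
      apply Finset.sum_eq_zero
      intro x _
      rw [if_neg]
      have := x.isLt
      omega
  simp only [hinner]
  have hlast : ∀ q : Fin m, (if q.val + 1 < m then (1:ℝ) else 0)
      = 1 - (if q = (⟨m - 1, by omega⟩ : Fin m) then 1 else 0) := by
    intro q
    have hq := q.isLt
    by_cases h : q.val + 1 < m
    · rw [if_pos h, if_neg, sub_zero]
      intro hc
      rw [hc] at h
      simp at h
      omega
    · rw [if_neg h, if_pos, sub_self]
      apply Fin.ext
      simp
      omega
  simp only [hlast]
  rw [Finset.sum_sub_distrib]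
  simp [Finset.card_univ]

lemma double_sum_perm {m : ℕ} (u : Equiv.Perm (Fin m)) (F : Fin m → Fin m → ℝ) :
    ∑ i : Fin m, ∑ j : Fin m, F i j = ∑ q : Fin m, ∑ q' : Fin m, F (u q) (u q') := by
  rw [← Equiv.sum_comp u (fun i => ∑ j, F i j)]
  exact Finset.sum_congr rfl fun q _ => (Equiv.sum_comp u _).symm

lemma permMatrix_eq {m : ℕ} (u : Equiv.Perm (Fin m)) (i r : Fin m) :
    permMatrix m u i r = if u.symm i = r then 1 else 0 := by
  unfold permMatrix
  congr 1
  simp only [eq_iff_iff]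
  exact (Equiv.symm_apply_eq u).symm

lemma main_eq (m : ℕ) (hm : 1 ≤ m) :
    ({y : Fin (m + 1) → Fin (m + 1) → ℝ |
        (∀ i j, y i j = 0 ∨ y i j = 1) ∧
        ∃ w : Fin m → Fin m → ℝ,
          (∀ i r, w i r = 0 ∨ w i r = 1) ∧ (w, y) ∈ Qbar1 m} =
      {y | ∃ u : Equiv.Perm (Fin m), y = tourVec m u}) := by
  ext y
  simp only [Set.mem_setOf_eq]
  constructor
  · rintro ⟨h01y, w, h01w, ⟨⟨hrow, hcol, hwnn⟩, hdiag, hy0, hyl, hineq, hsum, hynn⟩⟩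
    dsimp only at hrow hcol hwnn hdiag hy0 hyl hineq hsum hynn
    -- build the permutation from w
    have hu : ∀ r : Fin m, ∃! i, w i r = 1 :=
      fun r => sum_eq_one_unique (fun i => w i r) (fun i => h01w i r) (hcol r)
    have hu' : ∀ r : Fin m, ∃ i, w i r = 1 ∧ ∀ j, w j r = 1 → j = i := by
      intro r
      obtain ⟨i, hi, huniq⟩ := hu r
      exact ⟨i, hi, fun j hj => huniq j hj⟩
    choose v hv1 hv2 using hu'
    have hinj : Function.Injective v := by
      intro r r' h
      have h1 : w (v r) r = 1 := hv1 r
      have h2 : w (v r) r' = 1 := by rw [h]; exact hv1 r'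
      have huniq := sum_eq_one_unique (fun s => w (v r) s) (fun s => h01w _ s) (hrow (v r))
      exact huniq.unique h1 h2
    let u : Equiv.Perm (Fin m) := Equiv.ofBijective v (Finite.injective_iff_bijective.mp hinj)
    have huv : ∀ r, u r = v r := fun r => rfl
    have hw1 : ∀ i r, w i r = 1 ↔ i = u r := by
      intro i r
      constructor
      · intro h; rw [huv]; exact hv2 r i h
      · intro h; rw [h, huv]; exact hv1 r
    have hw : ∀ i r, w i r = if i = u r then 1 else 0 := by
      intro i r
      by_cases h : i = u r
      · rw [if_pos h]; exact (hw1 i r).2 h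
      · rw [if_neg h]
        rcases h01w i r with h0 | h1
        · exact h0
        · exact absurd ((hw1 i r).1 h1) h
    refine ⟨u, ?_⟩
    -- the arc values are 1
    have harc : ∀ q q' : Fin m, q'.val = q.val + 1 → y (u q).succ (u q').succ = 1 := by
      intro q q' hqq
      have hne : u q ≠ u q' := by
        intro h
        have := u.injective h
        rw [this] at hqq; omega
      have h1 : w (u q) q = 1 := (hw1 _ _).2 rfl
      have h2 : w (u q') q' = 1 := (hw1 _ _).2 rfl
      have hle := hineq (u q) (u q') q q' hne hqq
      rw [h1, h2] at hle
      rcases h01y (u q).succ (u q').succ with h | h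
      · rw [h] at hle; norm_num at hle
      · exact h
    -- the sum argument: all non-arc interior entries are 0
    have hle : ∀ p : Fin m × Fin m, (if p.2.val = p.1.val + 1 then (1:ℝ) else 0)
        ≤ (if u p.1 = u p.2 then 0 else y (u p.1).succ (u p.2).succ) := by
      rintro ⟨q, q'⟩
      by_cases h : q'.val = q.val + 1
      · have hne : u q ≠ u q' := by
          intro hc
          have := u.injective hc
          rw [this] at h; omega
        rw [if_pos h, if_neg hne, harc q q' h]
      · rw [if_neg h]
        by_cases hc : u q = u q'
        · rw [if_pos hc]
        · rw [if_neg hc]; exact hynn _ _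
    have hsum' : ∑ p : Fin m × Fin m,
        (if u p.1 = u p.2 then (0:ℝ) else y (u p.1).succ (u p.2).succ) = (m:ℝ) - 1 := by
      rw [Fintype.sum_prod_type]
      have := double_sum_perm u (fun i j => if i = j then (0:ℝ) else y i.succ j.succ)
      rw [← this]
      exact hsum
    have hGsum : ∑ p : Fin m × Fin m, (if p.2.val = p.1.val + 1 then (1:ℝ) else 0)
        = (m:ℝ) - 1 := by
      rw [Fintype.sum_prod_type]
      exact sum_G hm
    have hkey : ∀ p : Fin m × Fin m, (if p.2.val = p.1.val + 1 then (1:ℝ) else 0)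
        = (if u p.1 = u p.2 then 0 else y (u p.1).succ (u p.2).succ) := by
      have := (Finset.sum_eq_sum_iff_of_le (fun p _ => hle p)).1 (by rw [hGsum, hsum'])
      exact fun p => this p (mem_univ p)
    -- now prove y = tourVec u entrywise
    funext a b
    induction a using Fin.cases with
    | zero =>
      induction b using Fin.cases with
      | zero => rw [hdiag 0, tourVec_zero_zero]
      | succ j =>
        rw [hy0 j ⟨0, hm⟩ rfl, hw, tourVec_zero_succ]
        congr 1
        simp only [eq_iff_iff]
        constructor
        · intro h
          rw [h, Equiv.symm_apply_apply]
        · intro h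
          have hh : u.symm j = (⟨0, hm⟩ : Fin m) := Fin.ext h
          exact ((Equiv.symm_apply_eq u).mp hh)
    | succ i =>
      induction b using Fin.cases with
      | zero =>
        rw [hyl i ⟨m - 1, by omega⟩ rfl, hw, tourVec_succ_zero]
        congr 1
        simp only [eq_iff_iff]
        constructor
        · intro h
          rw [h, Equiv.symm_apply_apply]
        · intro h
          have hh : u.symm i = (⟨m - 1, by omega⟩ : Fin m) := Fin.ext h
          exact ((Equiv.symm_apply_eq u).mp hh)
      | succ j =>
        rw [tourVec_succ_succ]
        by_cases hij : i = j
        · subst hij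
          rw [hdiag, if_neg]
          omega
        · have := (hkey (u.symm i, u.symm j)).symm
          simp only [Equiv.apply_symm_apply] at this
          rw [if_neg hij] at this
          exact this
  · rintro ⟨u, rfl⟩
    refine ⟨fun i j => by unfold tourVec; split <;> simp, permMatrix m u,
      fun i r => by rw [permMatrix_eq]; split <;> simp, ?_⟩
    dsimp only [Qbar1, assignmentPolytope, Set.mem_setOf_eq]
    refine ⟨⟨?_, ?_, ?_⟩, ?_, ?_, ?_, ?_, ?_, ?_⟩
    · intro i
      simp only [permMatrix_eq]
      simp
    · intro r
      unfold permMatrix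
      simp
    · intro i r
      dsimp only [Prod.fst, Prod.snd]
      rw [permMatrix_eq]; split <;> norm_num
    · intro a
      dsimp only [Prod.fst, Prod.snd]
      induction a using Fin.cases with
      | zero => exact tourVec_zero_zero u
      | succ i => rw [tourVec_succ_succ, if_neg]; omega
    · intro i r hr
      dsimp only [Prod.fst, Prod.snd]
      rw [tourVec_zero_succ, permMatrix_eq]
      congr 1
      simp only [eq_iff_iff, Fin.ext_iff, hr]
    · intro i r hr
      dsimp only [Prod.fst, Prod.snd]
      rw [tourVec_succ_zero, permMatrix_eq]
      congr 1
      simp only [eq_iff_iff, Fin.ext_iff, hr]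
    · intro i j r r' hij hrr
      dsimp only [Prod.fst, Prod.snd]
      rw [tourVec_succ_succ, permMatrix_eq, permMatrix_eq]
      by_cases h1 : u.symm i = r
      · by_cases h2 : u.symm j = r'
        · rw [if_pos h1, if_pos h2, if_pos (by rw [h1, h2]; exact hrr)]
          norm_num
        · rw [if_pos h1, if_neg h2]
          split <;> norm_num
      · rw [if_neg h1]
        split <;> split <;> norm_num
    · have hterm : ∀ i j : Fin m, (if i = j then (0:ℝ) else tourVec m u i.succ j.succ)
          = if (u.symm j).val = (u.symm i).val + 1 then 1 else 0 := by
        intro i j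
        rw [tourVec_succ_succ]
        by_cases hij : i = j
        · subst hij
          rw [if_pos rfl, if_neg]; omega
        · rw [if_neg hij]
      simp only [hterm]
      rw [double_sum_perm u (fun i j => if (u.symm j).val = (u.symm i).val + 1 then (1:ℝ) else 0)]
      simp only [Equiv.symm_apply_apply]
      exact sum_G hm
    · intro i j
      dsimp only [Prod.fst, Prod.snd]
      unfold tourVec
      split <;> norm_num


/-- The set of 0/1 vectors `y` admitting a 0/1 matrix `w`
with `(w, y) ∈ Q̄₁` equals the set of tour incidence vectors `ȳ^u`;
consequently, the TSP polytope `𝒫ₙ` equals the convex hull of that set. -/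
theorem integral_points_of_Qbar1_eq_tours (n : ℕ) (hn : 3 ≤ n) :
    ({y : Fin (n - 1 + 1) → Fin (n - 1 + 1) → ℝ |
        (∀ i j, y i j = 0 ∨ y i j = 1) ∧
        ∃ w : Fin (n - 1) → Fin (n - 1) → ℝ,
          (∀ i r, w i r = 0 ∨ w i r = 1) ∧ (w, y) ∈ Qbar1 (n - 1)} =
      {y | ∃ u : Equiv.Perm (Fin (n - 1)), y = tourVec (n - 1) u}) ∧
    tspPolytope (n - 1) =
      convexHull ℝ
        {y : Fin (n - 1 + 1) → Fin (n - 1 + 1) → ℝ |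
          (∀ i j, y i j = 0 ∨ y i j = 1) ∧
          ∃ w : Fin (n - 1) → Fin (n - 1) → ℝ,
            (∀ i r, w i r = 0 ∨ w i r = 1) ∧ (w, y) ∈ Qbar1 (n - 1)} := by
  have h1 := main_eq (n - 1) (by omega)
  refine ⟨h1, ?_⟩
  rw [h1]
  rfl
end

section
/- For n = 5, the TSP polytope 𝒫₅ is a proper subset of the projection of Q̄₁ onto the y-variables: 𝒫₅ ⊊ { y : ∃ w ∈ ℝ^{4×4}, (w,y) ∈ Q̄₁ }; in particular Q̄₁ is not an extended formulation of 𝒫₅. -/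
-- AUX (to be placed above the theorem)

lemma convex_Qbar1 (m : ℕ) : Convex ℝ (Qbar1 m) := by
  intro p hp q hq a b ha hb hab
  obtain ⟨⟨hr1, hc1, hn1⟩, hd1, hA1, hB1, hI1, hS1, hY1⟩ := hp
  obtain ⟨⟨hr2, hc2, hn2⟩, hd2, hA2, hB2, hI2, hS2, hY2⟩ := hq
  have hfst : ∀ i r, (a • p + b • q).1 i r = a * p.1 i r + b * q.1 i r := fun i r => rfl
  have hsnd : ∀ i j, (a • p + b • q).2 i j = a * p.2 i j + b * q.2 i j := fun i j => rfl
  refine ⟨⟨fun i => ?_, fun r => ?_, fun i r => ?_⟩, fun i => ?_, fun i r hr => ?_,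
    fun i r hr => ?_, fun i j r r' hij hr => ?_, ?_, fun i j => ?_⟩
  · simp only [hfst, Finset.sum_add_distrib, ← Finset.mul_sum, hr1 i, hr2 i]
    rw [mul_one, mul_one, hab]
  · simp only [hfst, Finset.sum_add_distrib, ← Finset.mul_sum, hc1 r, hc2 r]
    rw [mul_one, mul_one, hab]
  · rw [hfst]
    exact add_nonneg (mul_nonneg ha (hn1 i r)) (mul_nonneg hb (hn2 i r))
  · rw [hsnd, hd1 i, hd2 i]; ring
  · rw [hsnd, hfst, hA1 i r hr, hA2 i r hr]
  · rw [hsnd, hfst, hB1 i r hr, hB2 i r hr]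
  · rw [hsnd, hfst, hfst]
    have e1 := hI1 i j r r' hij hr
    have e2 := hI2 i j r r' hij hr
    nlinarith [mul_le_mul_of_nonneg_left e1 ha, mul_le_mul_of_nonneg_left e2 hb]
  · have hterm : ∀ i j : Fin m,
        (if i = j then (0:ℝ) else (a • p + b • q).2 i.succ j.succ)
          = a * (if i = j then 0 else p.2 i.succ j.succ)
            + b * (if i = j then 0 else q.2 i.succ j.succ) := by
      intro i j; rw [hsnd]; split_ifs <;> ring
    simp only [hterm, Finset.sum_add_distrib, ← Finset.mul_sum, hS1, hS2]
    rw [← add_mul, hab, one_mul]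
  · rw [hsnd]
    exact add_nonneg (mul_nonneg ha (hY1 i j)) (mul_nonneg hb (hY2 i j))

lemma tour_mem4 (u : Equiv.Perm (Fin 4)) :
    (permMatrix 4 u, tourVec 4 u) ∈ Qbar1 4 := by
  have hdiag : ∀ a : Fin 5, tourVec 4 u a a = 0 := by
    intro a
    rw [tourVec, if_neg]
    rintro (⟨r, hr, ha, hb⟩ | ⟨r, hr, ha, hb⟩ | ⟨q, q', hq, ha, hb⟩)
    · exact Fin.succ_ne_zero _ (hb.symm.trans ha)
    · exact Fin.succ_ne_zero _ (ha.symm.trans hb)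
    · have h2 : q = q' := u.injective (Fin.succ_injective _ (ha.symm.trans hb))
      rw [h2] at hq; omega
  refine ⟨⟨fun i => ?_, fun r => ?_, fun i r => ?_⟩, hdiag, fun i r hr => ?_,
    fun i r hr => ?_, fun i j r r' hij hrr => ?_, ?_, fun a b => ?_⟩
  · -- row sums
    have hcond : ∀ r : Fin 4, (i = u r) = (u.symm i = r) := fun r =>
      propext ⟨fun h => by rw [h, Equiv.symm_apply_apply],
        fun h => by rw [← h, Equiv.apply_symm_apply]⟩
    simp only [permMatrix, hcond, Finset.sum_ite_eq, Finset.mem_univ, if_true]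
  · simp only [permMatrix, Finset.sum_ite_eq', Finset.mem_univ, if_true]
  · show (0:ℝ) ≤ permMatrix 4 u i r
    rw [permMatrix]; split <;> norm_num
  · -- y 0 i.succ = w i r, r.val = 0
    show tourVec 4 u 0 i.succ = permMatrix 4 u i r
    have hru : ∀ r' : Fin 4, r'.val = 0 → r' = r := fun r' h => Fin.ext (by omega)
    rw [tourVec, permMatrix]
    by_cases h : i = u r
    · rw [if_pos (Or.inl ⟨r, hr, rfl, by rw [h]⟩), if_pos h]
    · rw [if_neg, if_neg h]
      rintro (⟨r', hr', -, hb⟩ | ⟨r', -, ha, -⟩ | ⟨p, p', -, ha, -⟩)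
      · rw [hru r' hr'] at hb; exact h (Fin.succ_injective _ hb)
      · exact Fin.succ_ne_zero _ ha.symm
      · exact Fin.succ_ne_zero _ ha.symm
  · -- y i.succ 0 = w i r, r.val = 3
    show tourVec 4 u i.succ 0 = permMatrix 4 u i r
    have hru : ∀ r' : Fin 4, r'.val = 4 - 1 → r' = r := fun r' h => Fin.ext (by omega)
    rw [tourVec, permMatrix]
    by_cases h : i = u r
    · rw [if_pos (Or.inr (Or.inl ⟨r, hr, by rw [h], rfl⟩)), if_pos h]
    · rw [if_neg, if_neg h]
      rintro (⟨r', -, ha, -⟩ | ⟨r', hr', ha, -⟩ | ⟨p, p', -, -, hb⟩)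
      · exact Fin.succ_ne_zero _ ha
      · rw [hru r' hr'] at ha; exact h (Fin.succ_injective _ ha)
      · exact Fin.succ_ne_zero _ hb.symm
  · -- inequality
    show permMatrix 4 u i r + permMatrix 4 u j r' - tourVec 4 u i.succ j.succ ≤ 1
    have hy : 0 ≤ tourVec 4 u i.succ j.succ := by rw [tourVec]; split <;> norm_num
    by_cases hi : i = u r
    · by_cases hj : j = u r'
      · have hyt : tourVec 4 u i.succ j.succ = 1 := by
          rw [tourVec, if_pos (Or.inr (Or.inr ⟨r, r', hrr, by rw [hi], by rw [hj]⟩))]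
        rw [hyt]; simp only [permMatrix]
        rw [if_pos hi, if_pos hj]; norm_num
      · have h0 : permMatrix 4 u j r' = 0 := if_neg hj
        have h1 : permMatrix 4 u i r ≤ 1 := by rw [permMatrix]; split <;> norm_num
        rw [h0]; linarith
    · have h0 : permMatrix 4 u i r = 0 := if_neg hi
      have h1 : permMatrix 4 u j r' ≤ 1 := by rw [permMatrix]; split <;> norm_num
      rw [h0]; linarith
  · -- the sum
    show (∑ i : Fin 4, ∑ j : Fin 4, if i = j then (0:ℝ) else tourVec 4 u i.succ j.succ)
        = ((4:ℕ):ℝ) - 1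
    have key : ∀ q q' : Fin 4, tourVec 4 u (u q).succ (u q').succ
        = if q'.val = q.val + 1 then 1 else 0 := by
      intro q q'
      by_cases h : q'.val = q.val + 1
      · rw [tourVec, if_pos (Or.inr (Or.inr ⟨q, q', h, rfl, rfl⟩)), if_pos h]
      · rw [tourVec, if_neg, if_neg h]
        rintro (⟨r, -, ha, -⟩ | ⟨r, -, -, hb⟩ | ⟨p, p', hp, ha, hb⟩)
        · exact Fin.succ_ne_zero _ ha
        · exact Fin.succ_ne_zero _ hb
        · have h1 : q = p := u.injective (Fin.succ_injective _ ha)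
          have h2 : q' = p' := u.injective (Fin.succ_injective _ hb)
          exact h (by rw [h1, h2]; exact hp)
    have step1 : (∑ i : Fin 4, ∑ j : Fin 4, if i = j then (0:ℝ) else tourVec 4 u i.succ j.succ)
        = ∑ q : Fin 4, ∑ q' : Fin 4, if q'.val = q.val + 1 then (1:ℝ) else 0 := by
      rw [← Equiv.sum_comp u
        (fun i => ∑ j : Fin 4, if i = j then (0:ℝ) else tourVec 4 u i.succ j.succ)]
      refine Finset.sum_congr rfl fun q _ => ?_
      rw [← Equiv.sum_comp u
        (fun j => if u q = j then (0:ℝ) else tourVec 4 u (u q).succ j.succ)]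
      refine Finset.sum_congr rfl fun q' _ => ?_
      by_cases h : u q = u q'
      · have hqq : q = q' := u.injective h
        rw [if_pos h, if_neg (by rw [hqq]; omega)]
      · rw [if_neg h, key]
    rw [step1]
    simp only [Fin.sum_univ_four, Fin.val_zero, Fin.val_one,
      show ((2:Fin 4):ℕ) = 2 from rfl, show ((3:Fin 4):ℕ) = 3 from rfl]
    norm_num
  · show (0:ℝ) ≤ tourVec 4 u a b
    rw [tourVec]; split <;> norm_num

set_option linter.unreachableTactic false
set_option linter.unusedTactic false

/-- Fractional witness matrix: the average of two permutation matrices. -/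
noncomputable def wCex : Fin 4 → Fin 4 → ℝ :=
  fun i r => if i.val = r.val ∨ i.val = (r.val + 1) % 4 then 1/2 else 0

/-- A point of the projection of `Q̄₁` that is not in the TSP polytope
(its entry at `(2,3)` is `3 > 1`). -/
noncomputable def yCex : Fin 5 → Fin 5 → ℝ :=
  fun a b =>
    if a.val = 0 ∧ (b.val = 1 ∨ b.val = 2) then 1/2
    else if (a.val = 1 ∨ a.val = 4) ∧ b.val = 0 then 1/2
    else if a.val = 2 ∧ b.val = 3 then 3
    else 0

lemma yCex_mem : (wCex, yCex) ∈ Qbar1 4 := by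
  refine ⟨⟨fun i => ?_, fun r => ?_, fun i r => ?_⟩, fun i => ?_, fun i r hr => ?_,
    fun i r hr => ?_, fun i j r r' hij hrr => ?_, ?_, fun a b => ?_⟩
  · show (∑ r : Fin 4, wCex i r) = 1
    fin_cases i <;>
      norm_num [wCex, Fin.sum_univ_four, show ((3:Fin 4):ℕ) = 3 from rfl,
        show ((2:Fin 4):ℕ) = 2 from rfl]
  · show (∑ i : Fin 4, wCex i r) = 1
    fin_cases r <;>
      simp [wCex, Fin.sum_univ_four] <;> norm_num
  · show (0:ℝ) ≤ wCex i r
    rw [wCex]; split <;> norm_num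
  · show yCex i i = 0
    rw [yCex]
    split_ifs <;> first | rfl | (exfalso; omega) | (exfalso; simp_all)
  · show yCex 0 i.succ = wCex i r
    rw [yCex, wCex]
    have hi := i.isLt
    simp only [Fin.val_succ, Fin.val_zero, hr]
    split_ifs <;> first | rfl | (exfalso; omega) | (exfalso; simp_all)
  · show yCex i.succ 0 = wCex i r
    rw [yCex, wCex]
    have hi := i.isLt
    simp only [Fin.val_succ, Fin.val_zero, hr]
    split_ifs <;> first | rfl | (exfalso; omega) | (exfalso; simp_all)
  · show wCex i r + wCex j r' - yCex i.succ j.succ ≤ 1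
    have h1 : wCex i r ≤ 1/2 := by rw [wCex]; split <;> norm_num
    have h2 : wCex j r' ≤ 1/2 := by rw [wCex]; split <;> norm_num
    have h3 : (0:ℝ) ≤ yCex i.succ j.succ := by rw [yCex]; split_ifs <;> norm_num
    linarith
  · show (∑ i : Fin 4, ∑ j : Fin 4, if i = j then (0:ℝ) else yCex i.succ j.succ)
        = ((4:ℕ):ℝ) - 1
    have hy : ∀ i j : Fin 4, yCex i.succ j.succ
        = if i.val = 1 ∧ j.val = 2 then 3 else 0 := by
      intro i j
      have hi := i.isLt; have hj := j.isLt
      rw [yCex]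
      simp only [Fin.val_succ]
      split_ifs <;> first | rfl | (exfalso; omega) | (exfalso; simp_all)
    simp only [hy]
    simp only [Fin.sum_univ_four]
    norm_num [show ((3:Fin 4):ℕ) = 3 from rfl,
      show ((2:Fin 4):ℕ) = 2 from rfl, Fin.ext_iff]
  · show (0:ℝ) ≤ yCex a b
    rw [yCex]; split_ifs <;> norm_num

/-- For `n = 5`, the TSP polytope `𝒫₅` is a *proper* subset
of the projection of `Q̄₁` onto the `y`-variables; in particular that
projection does not equal `𝒫₅`, i.e. `Q̄₁` is not an extended formulation
of `𝒫₅`. -/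
theorem tspPolytope_ssubset_proj_Qbar1_five :
    tspPolytope 4 ⊂
        {y : Fin 5 → Fin 5 → ℝ | ∃ w : Fin 4 → Fin 4 → ℝ, (w, y) ∈ Qbar1 4} ∧
      {y : Fin 5 → Fin 5 → ℝ | ∃ w : Fin 4 → Fin 4 → ℝ, (w, y) ∈ Qbar1 4} ≠
        tspPolytope 4 := by
  have hsub : tspPolytope 4 ⊆
      {y : Fin 5 → Fin 5 → ℝ | ∃ w : Fin 4 → Fin 4 → ℝ, (w, y) ∈ Qbar1 4} := by
    apply convexHull_min
    · rintro y ⟨u, rfl⟩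
      exact ⟨permMatrix 4 u, tour_mem4 u⟩
    · rintro y1 ⟨w1, hw1⟩ y2 ⟨w2, hw2⟩ a b ha hb hab
      exact ⟨a • w1 + b • w2, convex_Qbar1 4 hw1 hw2 ha hb hab⟩
  have hyS : yCex ∈ {y : Fin 5 → Fin 5 → ℝ | ∃ w : Fin 4 → Fin 4 → ℝ, (w, y) ∈ Qbar1 4} :=
    ⟨wCex, yCex_mem⟩
  have hyP : yCex ∉ tspPolytope 4 := by
    intro h
    have hhalf : tspPolytope 4 ⊆ {z : Fin 5 → Fin 5 → ℝ | z 2 3 ≤ 1} := by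
      apply convexHull_min
      · rintro _ ⟨u, rfl⟩
        simp only [Set.mem_setOf_eq, tourVec]
        split <;> norm_num
      · intro z1 h1 z2 h2 a b ha hb hab
        simp only [Set.mem_setOf_eq] at *
        have hz : (a • z1 + b • z2) 2 3 = a * z1 2 3 + b * z2 2 3 := rfl
        rw [hz]
        nlinarith [mul_le_mul_of_nonneg_left h1 ha, mul_le_mul_of_nonneg_left h2 hb]
    have hle := hhalf h
    have : yCex 2 3 = 3 := by
      norm_num [yCex, show ((3:Fin 5):ℕ) = 3 from rfl, show ((2:Fin 5):ℕ) = 2 from rfl]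
    rw [Set.mem_setOf_eq, this] at hle
    norm_num at hle
  refine ⟨?_, fun h => hyP (by rw [← h]; exact hyS)⟩
  rw [Set.ssubset_def]
  exact ⟨hsub, fun hcon => hyP (hcon hyS)⟩
end

section
/- For n = 5, the polytope Q̄₁ is non-integral: Q̄₁ has an extreme point at least one of whose coordinates is not an integer. -/
/-- the fractional extreme point: `w`-part -/
noncomputable def pwX : Fin 4 → Fin 4 → ℝ := fun i r =>
  if i = 0 then (if r = 0 ∨ r = 1 then 1/2 else 0)
  else if i = 1 then (if r = 1 ∨ r = 2 then 1/2 else 0)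
  else if i = 2 then (if r = 0 ∨ r = 3 then 1/2 else 0)
  else (if r = 2 ∨ r = 3 then 1/2 else 0)

/-- the fractional extreme point: `y`-part -/
noncomputable def pyX : Fin 5 → Fin 5 → ℝ := fun a b =>
  if a = 0 then (if b = 1 ∨ b = 3 then 1/2 else 0)
  else if a = 2 ∧ b = 3 then 3
  else if (a = 3 ∨ a = 4) ∧ b = 0 then 1/2
  else 0

lemma succ04 : (0:Fin 4).succ = (1:Fin 5) := rfl
lemma succ14 : (1:Fin 4).succ = (2:Fin 5) := rfl
lemma succ24 : (2:Fin 4).succ = (3:Fin 5) := rfl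
lemma succ34 : (3:Fin 4).succ = (4:Fin 5) := rfl

lemma pX_mem : (pwX, pyX) ∈ Qbar1 4 := by
  refine ⟨⟨?_, ?_, ?_⟩, ?_, ?_, ?_, ?_, ?_, ?_⟩
  · intro i; fin_cases i <;> simp [pwX, Fin.sum_univ_four] <;> norm_num
  · intro r; fin_cases r <;> simp [pwX, Fin.sum_univ_four] <;> norm_num
  · intro i r; fin_cases i <;> fin_cases r <;> simp [pwX] <;> norm_num
  · intro i; fin_cases i <;> simp [pyX]
  · intro i r hr; fin_cases r <;> simp_all; fin_cases i <;>
      simp [pwX, pyX, succ04, succ14, succ24, succ34]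
  · intro i r hr; fin_cases r <;> simp_all; fin_cases i <;>
      simp [pwX, pyX, succ04, succ14, succ24, succ34]
  · intro i j r r' hij hr
    fin_cases r <;> fin_cases r' <;> simp_all <;>
      fin_cases i <;> fin_cases j <;> simp_all [pwX, pyX, succ04, succ14, succ24, succ34] <;>
      norm_num
  · simp [pyX, Fin.sum_univ_four, succ04, succ14, succ24, succ34]; norm_num
  · intro i j; fin_cases i <;> fin_cases j <;> simp [pyX] <;> norm_num

/-- any point of `Qbar1 4` with the right zero pattern equals `(pwX, pyX)` -/
lemma pinX (q : (Fin 4 → Fin 4 → ℝ) × (Fin 5 → Fin 5 → ℝ)) (hq : q ∈ Qbar1 4)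
    (hw : ∀ i r : Fin 4, pwX i r = 0 → q.1 i r = 0)
    (hy : ∀ i j : Fin 4, i ≠ j → ¬(i = 1 ∧ j = 2) → q.2 i.succ j.succ = 0) :
    q = (pwX, pyX) := by
  obtain ⟨⟨hrow, hcol, hwnn⟩, hdiag, hlink0, hlinkm, hineq, hsum, hynn⟩ := hq
  -- zeros of w
  have z02 : q.1 0 2 = 0 := hw 0 2 (by simp [pwX] <;> decide)
  have z03 : q.1 0 3 = 0 := hw 0 3 (by simp [pwX] <;> decide)
  have z10 : q.1 1 0 = 0 := hw 1 0 (by simp [pwX] <;> decide)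
  have z13 : q.1 1 3 = 0 := hw 1 3 (by simp [pwX] <;> decide)
  have z21 : q.1 2 1 = 0 := hw 2 1 (by simp [pwX] <;> decide)
  have z22 : q.1 2 2 = 0 := hw 2 2 (by simp [pwX] <;> decide)
  have z30 : q.1 3 0 = 0 := hw 3 0 (by simp [pwX] <;> decide)
  have z31 : q.1 3 1 = 0 := hw 3 1 (by simp [pwX] <;> decide)
  have y12 : q.2 1 2 = 0 := by have := hy 0 1 (by decide) (by decide); rwa [succ04, succ14] at this
  have y31 : q.2 3 1 = 0 := by have := hy 2 0 (by decide) (by decide); rwa [succ24, succ04] at this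
  have r0 := hrow 0; have r1 := hrow 1; have r2 := hrow 2; have r3 := hrow 3
  have c0 := hcol 0; have c1 := hcol 1; have c2 := hcol 2; have c3 := hcol 3
  simp only [Fin.sum_univ_four] at r0 r1 r2 r3 c0 c1 c2 c3
  have i1 : q.1 0 0 + q.1 1 1 - q.2 1 2 ≤ 1 := by
    have := hineq 0 1 0 1 (by decide) (by decide); rwa [succ04, succ14] at this
  have i2 : q.1 2 0 + q.1 0 1 - q.2 3 1 ≤ 1 := by
    have := hineq 2 0 0 1 (by decide) (by decide); rwa [succ24, succ04] at this
  -- pin w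
  have e00 : q.1 0 0 = 1/2 := by linarith
  have e01 : q.1 0 1 = 1/2 := by linarith
  have e11 : q.1 1 1 = 1/2 := by linarith
  have e12 : q.1 1 2 = 1/2 := by linarith
  have e20 : q.1 2 0 = 1/2 := by linarith
  have e23 : q.1 2 3 = 1/2 := by linarith
  have e32 : q.1 3 2 = 1/2 := by linarith
  have e33 : q.1 3 3 = 1/2 := by linarith
  -- pin y
  simp only [Fin.sum_univ_four, succ04, succ14, succ24, succ34] at hsum
  have y01 : q.2 1 2 = 0 := y12
  have y02 : q.2 1 3 = 0 := by have := hy 0 2 (by decide) (by decide); rwa [succ04, succ24] at this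
  have y03 : q.2 1 4 = 0 := by have := hy 0 3 (by decide) (by decide); rwa [succ04, succ34] at this
  have y10 : q.2 2 1 = 0 := by have := hy 1 0 (by decide) (by decide); rwa [succ14, succ04] at this
  have y13 : q.2 2 4 = 0 := by have := hy 1 3 (by decide) (by decide); rwa [succ14, succ34] at this
  have y20 : q.2 3 1 = 0 := y31
  have y23 : q.2 3 4 = 0 := by have := hy 2 3 (by decide) (by decide); rwa [succ24, succ34] at this
  have y30 : q.2 4 1 = 0 := by have := hy 3 0 (by decide) (by decide); rwa [succ34, succ04] at this
  have y31' : q.2 4 2 = 0 := by have := hy 3 1 (by decide) (by decide); rwa [succ34, succ14] at this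
  have y32 : q.2 4 3 = 0 := by have := hy 3 2 (by decide) (by decide); rwa [succ34, succ24] at this
  have y21 : q.2 3 2 = 0 := by have := hy 2 1 (by decide) (by decide); rwa [succ24, succ14] at this
  simp only [Fin.reduceEq, reduceIte, Nat.cast_ofNat] at hsum
  have y12v : q.2 2 3 = 3 := by linarith
  -- links
  have l0 : ∀ i : Fin 4, q.2 0 i.succ = q.1 i 0 := fun i => hlink0 i 0 rfl
  have lm : ∀ i : Fin 4, q.2 i.succ 0 = q.1 i 3 := fun i => hlinkm i 3 rfl
  have l00 := l0 0; have l01 := l0 1; have l02 := l0 2; have l03 := l0 3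
  have lm0 := lm 0; have lm1 := lm 1; have lm2 := lm 2; have lm3 := lm 3
  rw [succ04] at l00 lm0; rw [succ14] at l01 lm1
  rw [succ24] at l02 lm2; rw [succ34] at l03 lm3
  have hd0 := hdiag 0; have hd1 := hdiag 1; have hd2 := hdiag 2
  have hd3 := hdiag 3; have hd4 := hdiag 4
  -- all 16 w-coordinates
  have B00 : q.1 0 0 = pwX 0 0 := by rw [e00]; simp [pwX]
  have B01 : q.1 0 1 = pwX 0 1 := by rw [e01]; simp [pwX]
  have B02 : q.1 0 2 = pwX 0 2 := by rw [z02]; simp [pwX]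
  have B03 : q.1 0 3 = pwX 0 3 := by rw [z03]; simp [pwX]
  have B10 : q.1 1 0 = pwX 1 0 := by rw [z10]; simp [pwX]
  have B11 : q.1 1 1 = pwX 1 1 := by rw [e11]; simp [pwX]
  have B12 : q.1 1 2 = pwX 1 2 := by rw [e12]; simp [pwX]
  have B13 : q.1 1 3 = pwX 1 3 := by rw [z13]; simp [pwX]
  have B20 : q.1 2 0 = pwX 2 0 := by rw [e20]; simp [pwX]
  have B21 : q.1 2 1 = pwX 2 1 := by rw [z21]; simp [pwX]
  have B22 : q.1 2 2 = pwX 2 2 := by rw [z22]; simp [pwX]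
  have B23 : q.1 2 3 = pwX 2 3 := by rw [e23]; simp [pwX]
  have B30 : q.1 3 0 = pwX 3 0 := by rw [z30]; simp [pwX]
  have B31 : q.1 3 1 = pwX 3 1 := by rw [z31]; simp [pwX]
  have B32 : q.1 3 2 = pwX 3 2 := by rw [e32]; simp [pwX]
  have B33 : q.1 3 3 = pwX 3 3 := by rw [e33]; simp [pwX]
  -- all 25 y-coordinates
  have A00 : q.2 0 0 = pyX 0 0 := by rw [hd0]; simp [pyX]
  have A01 : q.2 0 1 = pyX 0 1 := by rw [l00, e00]; simp [pyX]
  have A02 : q.2 0 2 = pyX 0 2 := by rw [l01, z10]; simp [pyX]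
  have A03 : q.2 0 3 = pyX 0 3 := by rw [l02, e20]; simp [pyX]
  have A04 : q.2 0 4 = pyX 0 4 := by rw [l03, z30]; simp [pyX]
  have A10 : q.2 1 0 = pyX 1 0 := by rw [lm0, z03]; simp [pyX]
  have A11 : q.2 1 1 = pyX 1 1 := by rw [hd1]; simp [pyX]
  have A12 : q.2 1 2 = pyX 1 2 := by rw [y01]; simp [pyX]
  have A13 : q.2 1 3 = pyX 1 3 := by rw [y02]; simp [pyX]
  have A14 : q.2 1 4 = pyX 1 4 := by rw [y03]; simp [pyX]
  have A20 : q.2 2 0 = pyX 2 0 := by rw [lm1, z13]; simp [pyX]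
  have A21 : q.2 2 1 = pyX 2 1 := by rw [y10]; simp [pyX]
  have A22 : q.2 2 2 = pyX 2 2 := by rw [hd2]; simp [pyX]
  have A23 : q.2 2 3 = pyX 2 3 := by rw [y12v]; simp [pyX]
  have A24 : q.2 2 4 = pyX 2 4 := by rw [y13]; simp [pyX]
  have A30 : q.2 3 0 = pyX 3 0 := by rw [lm2, e23]; simp [pyX]
  have A31 : q.2 3 1 = pyX 3 1 := by rw [y20]; simp [pyX]
  have A32 : q.2 3 2 = pyX 3 2 := by rw [y21]; simp [pyX]
  have A33 : q.2 3 3 = pyX 3 3 := by rw [hd3]; simp [pyX]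
  have A34 : q.2 3 4 = pyX 3 4 := by rw [y23]; simp [pyX]
  have A40 : q.2 4 0 = pyX 4 0 := by rw [lm3, e33]; simp [pyX]
  have A41 : q.2 4 1 = pyX 4 1 := by rw [y30]; simp [pyX]
  have A42 : q.2 4 2 = pyX 4 2 := by rw [y31']; simp [pyX]
  have A43 : q.2 4 3 = pyX 4 3 := by rw [y32]; simp [pyX]
  have A44 : q.2 4 4 = pyX 4 4 := by rw [hd4]; simp [pyX]
  refine Prod.ext ?_ ?_
  · funext i r
    fin_cases i <;> fin_cases r <;>
      first
        | exact B00 | exact B01 | exact B02 | exact B03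
        | exact B10 | exact B11 | exact B12 | exact B13
        | exact B20 | exact B21 | exact B22 | exact B23
        | exact B30 | exact B31 | exact B32 | exact B33
  · funext a b
    fin_cases a <;> fin_cases b <;>
      first
        | exact A00 | exact A01 | exact A02 | exact A03 | exact A04
        | exact A10 | exact A11 | exact A12 | exact A13 | exact A14
        | exact A20 | exact A21 | exact A22 | exact A23 | exact A24
        | exact A30 | exact A31 | exact A32 | exact A33 | exact A34
        | exact A40 | exact A41 | exact A42 | exact A43 | exact A44

lemma zero_of_combX {a b u v : ℝ} (ha : 0 < a) (hb : 0 < b) (hu : 0 ≤ u) (hv : 0 ≤ v)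
    (h : a * u + b * v = 0) : u = 0 := by
  have h1 : a * u = 0 := by
    have := mul_nonneg ha.le hu
    have := mul_nonneg hb.le hv
    linarith
  rcases mul_eq_zero.1 h1 with h' | h'
  · exact absurd h' ha.ne'
  · exact h'

lemma keyX (a b : ℝ) (ha : 0 < a) (hb : 0 < b)
    (x y : (Fin 4 → Fin 4 → ℝ) × (Fin 5 → Fin 5 → ℝ))
    (hx : x ∈ Qbar1 4) (hy : y ∈ Qbar1 4)
    (hc : a • x + b • y = ((pwX, pyX) : (Fin 4 → Fin 4 → ℝ) × (Fin 5 → Fin 5 → ℝ))) :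
    x = (pwX, pyX) := by
  have hcw : ∀ i r, a * x.1 i r + b * y.1 i r = pwX i r := by
    intro i r
    have := congrFun (congrFun (congrArg Prod.fst hc) i) r
    simpa using this
  have hcy : ∀ i j, a * x.2 i j + b * y.2 i j = pyX i j := by
    intro i j
    have := congrFun (congrFun (congrArg Prod.snd hc) i) j
    simpa using this
  refine pinX x hx ?_ ?_
  · intro i r h0
    have h := hcw i r
    rw [h0] at h
    exact zero_of_combX ha hb (hx.1.2.2 i r) (hy.1.2.2 i r) h
  · intro i j hij hne
    have h := hcy i.succ j.succ
    have h0 : pyX i.succ j.succ = 0 := by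
      have ha0 : i.succ ≠ (0 : Fin 5) := Fin.succ_ne_zero i
      have hb0 : j.succ ≠ (0 : Fin 5) := Fin.succ_ne_zero j
      have h23 : ¬(i.succ = (2 : Fin 5) ∧ j.succ = (3 : Fin 5)) := by
        rintro ⟨h1, h2⟩
        exact hne ⟨Fin.succ_injective _ (h1.trans succ14.symm),
          Fin.succ_injective _ (h2.trans succ24.symm)⟩
      have h30 : ¬((i.succ = (3 : Fin 5) ∨ i.succ = (4 : Fin 5)) ∧ j.succ = (0 : Fin 5)) :=
        fun hh => hb0 hh.2
      simp only [pyX]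
      rw [if_neg ha0, if_neg h23, if_neg h30]
    rw [h0] at h
    exact zero_of_combX ha hb (hx.2.2.2.2.2.2 i.succ j.succ) (hy.2.2.2.2.2.2 i.succ j.succ) h

/-- For `n = 5`, the polytope `Q̄₁` is non-integral: it has
an extreme point at least one of whose coordinates is not an integer. -/
theorem Qbar1_nonintegral_five :
    ∃ p ∈ Set.extremePoints ℝ (Qbar1 4),
      (∃ i r, ¬∃ z : ℤ, p.1 i r = (z : ℝ)) ∨ (∃ i j, ¬∃ z : ℤ, p.2 i j = (z : ℝ)) := by
  refine ⟨(pwX, pyX), ?_, Or.inl ⟨0, 0, ?_⟩⟩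
  · rw [mem_extremePoints]
    refine ⟨pX_mem, ?_⟩
    intro x₁ hx₁ x₂ hx₂ hseg
    obtain ⟨a, b, ha, hb, hab, hcomb⟩ := hseg
    refine ⟨keyX a b ha hb x₁ x₂ hx₁ hx₂ hcomb, keyX b a hb ha x₂ x₁ hx₂ hx₁ ?_⟩
    rw [add_comm]; exact hcomb
  · rintro ⟨z, hz⟩
    have hz' : pwX 0 0 = (z : ℝ) := hz
    have h12 : pwX 0 0 = 1/2 := by simp [pwX]
    have h2 : (2 * z : ℤ) = 1 := by
      exact_mod_cast (by rw [h12] at hz'; linarith : (2 * z : ℝ) = 1)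
    omega
end

section
/- Let c ∈ ℝ^{m×m} be any cost matrix. A point (w*, y*) ∈ Q̄₁ minimizes the linear objective Σ_{i,r} c_{ir} w_{ir} over Q̄₁ if and only if w* minimizes Σ_{i,r} c_{ir} w_{ir} over the assignment polytope 𝒜ₙ. -/
def extY (m : ℕ) (w S : Fin m → Fin m → ℝ) (r0 rl e0 e1 : Fin m) (D : ℝ) :
    Fin (m + 1) → Fin (m + 1) → ℝ :=
  fun a b =>
    Fin.cases (Fin.cases 0 (fun j => w j r0) b)
      (fun i => Fin.cases (w i rl)
        (fun j => if i = j then 0 else S i j + if i = e0 ∧ j = e1 then D else 0) b) a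

@[simp] lemma extY_zero_zero (m w S r0 rl e0 e1 D) :
    extY m w S r0 rl e0 e1 D 0 0 = 0 := by simp [extY]
@[simp] lemma extY_zero_succ (m w S r0 rl e0 e1 D) (j : Fin m) :
    extY m w S r0 rl e0 e1 D 0 j.succ = w j r0 := by simp [extY]
@[simp] lemma extY_succ_zero (m w S r0 rl e0 e1 D) (i : Fin m) :
    extY m w S r0 rl e0 e1 D i.succ 0 = w i rl := by simp [extY]
@[simp] lemma extY_succ_succ (m w S r0 rl e0 e1 D) (i j : Fin m) :
    extY m w S r0 rl e0 e1 D i.succ j.succ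
      = if i = j then 0 else S i j + if i = e0 ∧ j = e1 then D else 0 := by simp [extY]

lemma countL (k : ℕ) :
    ∑ r : Fin (k + 1), (if (r : ℕ) + 1 < k + 1 then (1 : ℝ) else 0) = k := by
  rw [Fin.sum_univ_castSucc]
  simp [Fin.is_lt]

lemma exists_extension (m : ℕ) (hm : 2 ≤ m) (w : Fin m → Fin m → ℝ)
    (hw : w ∈ assignmentPolytope m) : ∃ y, (w, y) ∈ Qbar1 m := by
  obtain ⟨k, rfl⟩ : ∃ k, m = k + 1 := ⟨m - 1, by omega⟩
  obtain ⟨hrow, hcol, hpos⟩ := hw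
  have hk : 1 ≤ k := by omega
  have hle1 : ∀ i r, w i r ≤ 1 := by
    intro i r
    calc w i r ≤ ∑ r', w i r' :=
          Finset.single_le_sum (fun r' _ => hpos i r') (Finset.mem_univ r)
      _ = 1 := hrow i
  set S : Fin (k + 1) → Fin (k + 1) → ℝ := fun i j =>
    ∑ r : Fin (k + 1), if h : (r : ℕ) + 1 < k + 1 then w i r * w j ⟨(r : ℕ) + 1, h⟩ else 0
    with hSdef
  have hSnn : ∀ i j, 0 ≤ S i j := by
    intro i j
    apply Finset.sum_nonneg
    intro r _
    split
    · exact mul_nonneg (hpos i r) (hpos j _)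
    · exact le_rfl
  have hSle : ∀ (i j r r' : Fin (k + 1)), (r' : ℕ) = (r : ℕ) + 1 →
      w i r * w j r' ≤ S i j := by
    intro i j r r' hr'
    have hc : (r : ℕ) + 1 < k + 1 := hr' ▸ r'.isLt
    have he : (⟨(r : ℕ) + 1, hc⟩ : Fin (k + 1)) = r' := Fin.ext hr'.symm
    calc w i r * w j r'
        = (if h : (r : ℕ) + 1 < k + 1 then w i r * w j ⟨(r : ℕ) + 1, h⟩ else 0) := by
          rw [dif_pos hc, he]
      _ ≤ S i j := by
          refine Finset.single_le_sum (f := fun t : Fin (k + 1) =>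
            if h : (t : ℕ) + 1 < k + 1 then w i t * w j ⟨(t : ℕ) + 1, h⟩ else 0)
            (fun t _ => ?_) (Finset.mem_univ r)
          split
          · exact mul_nonneg (hpos i t) (hpos j _)
          · exact le_rfl
  have hSsum : ∑ i, ∑ j, S i j = (k : ℝ) := by
    have hswap : ∑ i, ∑ j, S i j
        = ∑ r : Fin (k + 1), ∑ i : Fin (k + 1), ∑ j : Fin (k + 1),
            (if h : (r : ℕ) + 1 < k + 1 then w i r * w j ⟨(r : ℕ) + 1, h⟩ else 0) := by
      calc ∑ i, ∑ j, S i j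
          = ∑ i : Fin (k+1), ∑ r : Fin (k+1), ∑ j : Fin (k+1),
              (if h : (r : ℕ) + 1 < k + 1 then w i r * w j ⟨(r : ℕ) + 1, h⟩ else 0) := by
            refine Finset.sum_congr rfl fun i _ => ?_
            rw [hSdef]
            exact Finset.sum_comm
        _ = _ := Finset.sum_comm
    rw [hswap]
    have hinner : ∀ r : Fin (k + 1),
        (∑ i : Fin (k+1), ∑ j : Fin (k+1),
          if h : (r : ℕ) + 1 < k + 1 then w i r * w j ⟨(r : ℕ) + 1, h⟩ else 0)
        = if (r : ℕ) + 1 < k + 1 then (1 : ℝ) else 0 := by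
      intro r
      by_cases hc : (r : ℕ) + 1 < k + 1
      · simp only [dif_pos hc, if_pos hc]
        simp_rw [← Finset.mul_sum]
        rw [hcol ⟨(r : ℕ) + 1, hc⟩]
        simp [hcol r]
      · simp [hc]
    simp_rw [hinner]
    exact countL k
  set T := ∑ i : Fin (k + 1), ∑ j : Fin (k + 1), if i = j then 0 else S i j with hTdef
  have hTle : T ≤ (k : ℝ) := by
    rw [hTdef, ← hSsum]
    refine Finset.sum_le_sum fun i _ => Finset.sum_le_sum fun j _ => ?_
    split
    · exact hSnn i j
    · exact le_rfl
  have hDnn : 0 ≤ (k : ℝ) - T := by linarith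
  have h01 : (0 : Fin (k + 1)) ≠ (1 : Fin (k + 1)) := by
    intro hEq
    have := congrArg Fin.val hEq
    simp [Fin.val_one'] at this
    omega
  set r0 : Fin (k + 1) := ⟨0, by omega⟩ with hr0
  set rl : Fin (k + 1) := ⟨k, by omega⟩ with hrl
  set Y : Fin (k + 2) → Fin (k + 2) → ℝ := extY (k + 1) w S r0 rl 0 1 ((k : ℝ) - T) with hYdef
  have hY0s : ∀ j : Fin (k + 1), Y 0 j.succ = w j r0 := fun j => extY_zero_succ ..
  have hYs0 : ∀ i : Fin (k + 1), Y i.succ 0 = w i rl := fun i => extY_succ_zero ..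
  have hYss : ∀ i j : Fin (k + 1), Y i.succ j.succ
      = if i = j then 0 else S i j + if i = 0 ∧ j = 1 then (k : ℝ) - T else 0 :=
    fun i j => extY_succ_succ ..
  refine ⟨Y, ⟨hrow, hcol, hpos⟩, ?_, ?_, ?_, ?_, ?_, ?_⟩
  · -- diagonal
    intro a
    rcases Fin.eq_zero_or_eq_succ a with rfl | ⟨i, rfl⟩
    · rw [show (w, Y).2 = Y from rfl, hYdef]
      exact extY_zero_zero ..
    · rw [show (w, Y).2 = Y from rfl, hYss]
      simp
  · -- depot out
    intro i r hr
    have hre : r = r0 := Fin.ext (by simp [hr0, hr])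
    rw [show (w, Y).2 = Y from rfl, show (w, Y).1 = w from rfl, hY0s, hre]
  · -- depot in
    intro i r hr
    have hre : r = rl := Fin.ext (by simp [hrl]; omega)
    rw [show (w, Y).2 = Y from rfl, show (w, Y).1 = w from rfl, hYs0, hre]
  · -- linking inequalities
    intro i j r r' hij hr'
    rw [show (w, Y).2 = Y from rfl, show (w, Y).1 = w from rfl, hYss, if_neg hij]
    have h1 : w i r * w j r' ≤ S i j := hSle i j r r' hr'
    have hδ : 0 ≤ (if i = 0 ∧ j = 1 then (k : ℝ) - T else 0) := by
      split
      · exact hDnn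
      · exact le_rfl
    have hprod : 0 ≤ (1 - w i r) * (1 - w j r') :=
      mul_nonneg (by linarith [hle1 i r]) (by linarith [hle1 j r'])
    nlinarith [hpos i r, hpos j r']
  · -- the equality sum
    rw [show (w, Y).2 = Y from rfl]
    have hterm : ∀ i j : Fin (k + 1),
        (if i = j then (0 : ℝ) else Y i.succ j.succ)
          = (if i = j then 0 else S i j)
            + (if i = 0 ∧ j = 1 then (if i = j then (0 : ℝ) else (k : ℝ) - T) else 0) := by
      intro i j
      by_cases hij : i = j
      · simp [hij]
      · simp [hYss, hij]
    simp only [hterm]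
    rw [Finset.sum_congr rfl (fun i _ => Finset.sum_add_distrib), Finset.sum_add_distrib]
    have hB : ∑ i : Fin (k + 1), ∑ j : Fin (k + 1),
        (if i = 0 ∧ j = 1 then (if i = j then (0 : ℝ) else (k : ℝ) - T) else 0)
        = (k : ℝ) - T := by
      rw [Finset.sum_eq_single (0 : Fin (k + 1))]
      · rw [Finset.sum_eq_single (1 : Fin (k + 1))]
        · simp [h01]
        · intro b _ hb; simp [hb]
        · simp
      · intro b _ hb
        refine Finset.sum_eq_zero fun j _ => ?_
        simp [hb]
      · simp
    rw [hB, ← hTdef]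
    push_cast
    ring
  · -- nonnegativity
    intro a b
    rw [show (w, Y).2 = Y from rfl]
    rcases Fin.eq_zero_or_eq_succ a with rfl | ⟨i, rfl⟩
    · rcases Fin.eq_zero_or_eq_succ b with rfl | ⟨j, rfl⟩
      · rw [hYdef]
        exact (extY_zero_zero ..).ge
      · rw [hY0s]; exact hpos j r0
    · rcases Fin.eq_zero_or_eq_succ b with rfl | ⟨j, rfl⟩
      · rw [hYs0]; exact hpos i rl
      · rw [hYss]
        split
        · exact le_rfl
        · refine add_nonneg (hSnn i j) ?_
          split
          · exact hDnn
          · exact le_rfl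

/-- For any cost matrix `c`, a point `(w*, y*) ∈ Q̄₁`
minimizes the linear objective `Σ_{i,r} c_{ir} w_{ir}` over `Q̄₁` if and only
if `w*` minimizes `Σ_{i,r} c_{ir} w_{ir}` over the assignment polytope `𝒜ₙ`. -/
theorem optimal_Qbar1_iff_optimal_LAP (n : ℕ) (hn : 3 ≤ n)
    (c : Fin (n - 1) → Fin (n - 1) → ℝ)
    (wstar : Fin (n - 1) → Fin (n - 1) → ℝ)
    (ystar : Fin (n - 1 + 1) → Fin (n - 1 + 1) → ℝ)
    (h : (wstar, ystar) ∈ Qbar1 (n - 1)) :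
    (∀ p ∈ Qbar1 (n - 1),
        ∑ i, ∑ r, c i r * wstar i r ≤ ∑ i, ∑ r, c i r * p.1 i r) ↔
      (∀ w ∈ assignmentPolytope (n - 1),
        ∑ i, ∑ r, c i r * wstar i r ≤ ∑ i, ∑ r, c i r * w i r) := by
  constructor
  · intro H w hwA
    obtain ⟨y, hy⟩ := exists_extension (n - 1) (by omega) w hwA
    exact H (w, y) hy
  · intro H p hp
    exact H p.1 hp.1
end

section
/- Let Q₀ ⊆ ℝ^{m×m} × ℝ^κ be a nonempty compact convex set whose projection onto the w-variables equals the assignment polytope 𝒜ₙ, and suppose the projection map (ŵ, x̂) ↦ ŵ restricts to a bijection from the extreme points of Q₀ onto the extreme points of 𝒜ₙ. Let c̃ ∈ ℝ^κ be such that for every extreme point (ŵ, x̂) of Q₀, if ŵ is the permutation matrix of a permutation u of {1,…,m} (ŵ_{ir} = 1 iff i = u(r)), then c̃ᵀx̂ = TourCost(u). Then the minimum of c̃ᵀx over (w,x) ∈ Q₀ equals the minimum of TourCost(u) over all permutations u of {1,…,m}; moreover, for every extreme point (ŵ, x̂) of Q₀ attaining this minimum, the permutation u whose permutation matrix is ŵ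 is a minimum-cost TSP tour. (Thus the linear program over Q₀ correctly solves the TSP optimization problem, irrespective of whether Q₀ projects to the TSP polytope 𝒫ₙ or not.) -/
lemma assignment_eq_DS (m : ℕ) :
    assignmentPolytope m = (doublyStochastic ℝ (Fin m) : Set (Matrix (Fin m) (Fin m) ℝ)) := by
  ext w
  refine Iff.trans ?_ (mem_doublyStochastic_iff_sum (M := (w : Matrix (Fin m) (Fin m) ℝ))).symm
  constructor
  · rintro ⟨h1, h2, h3⟩; exact ⟨h3, h1, h2⟩
  · rintro ⟨h3, h1, h2⟩; exact ⟨h1, h2, h3⟩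

lemma permMatrix_eq_s12 (m : ℕ) (u : Equiv.Perm (Fin m)) :
    permMatrix m u = (Equiv.Perm.permMatrix ℝ u⁻¹ : Matrix (Fin m) (Fin m) ℝ) := by
  funext i r
  simp only [permMatrix, Equiv.Perm.permMatrix, PEquiv.toMatrix_apply, Equiv.toPEquiv_apply,
    Option.mem_some_iff]
  by_cases h : i = u r
  · simp [h]
  · have : ¬ r = u⁻¹ i := fun hr => h (by simp [hr])
    simp [h, Ne.symm this]
    exact fun h' => this h'.symm

lemma extreme_is_perm {m : ℕ} {w : Fin m → Fin m → ℝ}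
    (hw : w ∈ Set.extremePoints ℝ (assignmentPolytope m)) :
    ∃ u : Equiv.Perm (Fin m), w = permMatrix m u := by
  rw [assignment_eq_DS] at hw
  have h2 : (doublyStochastic ℝ (Fin m) : Set (Matrix (Fin m) (Fin m) ℝ)) =
      convexHull ℝ {σ.permMatrix ℝ | σ : Equiv.Perm (Fin m)} := by
    rw [doublyStochastic_eq_convexHull_permMatrix]
  rw [h2] at hw
  obtain ⟨σ, hσ⟩ := extremePoints_convexHull_subset (E := Matrix (Fin m) (Fin m) ℝ) hw
  exact ⟨σ⁻¹, by rw [permMatrix_eq_s12]; rw [← hσ]; simp; rfl⟩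

lemma perm_mem (m : ℕ) (u : Equiv.Perm (Fin m)) : permMatrix m u ∈ assignmentPolytope m := by
  refine ⟨fun i => ?_, fun r => ?_, fun i r => by unfold permMatrix; positivity⟩
  · have : ∀ r : Fin m, (i = u r) ↔ (r = u⁻¹ i) := fun r => by
      constructor <;> intro h <;> simp [h]
    simp only [permMatrix, this]
    simp
  · simp [permMatrix]

lemma perm_is_extreme {m : ℕ} (u : Equiv.Perm (Fin m)) :
    permMatrix m u ∈ Set.extremePoints ℝ (assignmentPolytope m) := by
  refine ⟨perm_mem m u, ?_⟩
  intro x hx y hy hseg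
  obtain ⟨a, b, ha, hb, hab, hsum⟩ := hseg
  have key : ∀ z ∈ assignmentPolytope m, (∀ i r, i ≠ u r → z i r = 0) →
      z = permMatrix m u := by
    intro z hz hz0
    funext i r
    by_cases h : i = u r
    · subst h
      have hrow := hz.1 (u r)
      rw [Finset.sum_eq_single r] at hrow
      · simpa [permMatrix] using hrow
      · intro r' _ hr'
        exact hz0 _ _ (fun hc => hr' (u.injective hc.symm))
      · simp
    · rw [hz0 i r h]; simp [permMatrix, h]
  have hzero : ∀ i r, i ≠ u r → x i r = 0 ∧ y i r = 0 := by
    intro i r h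
    have h0 : a * x i r + b * y i r = 0 := by
      have := congrFun (congrFun hsum i) r
      simp only [Prod.smul_fst, Pi.add_apply, Pi.smul_apply, smul_eq_mul] at this
      rw [this]; simp [permMatrix, h]
    have hx0 : 0 ≤ a * x i r := mul_nonneg ha.le (hx.2.2 i r)
    have hy0 : 0 ≤ b * y i r := mul_nonneg hb.le (hy.2.2 i r)
    constructor
    · have : a * x i r = 0 := le_antisymm (by linarith) hx0
      exact (mul_eq_zero.mp this).resolve_left (ne_of_gt ha)
    · have : b * y i r = 0 := le_antisymm (by linarith) hy0
      exact (mul_eq_zero.mp this).resolve_left (ne_of_gt hb)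
  exact key x hx (fun i r h => (hzero i r h).1)

noncomputable def costL (m κ : ℕ) (c : Fin κ → ℝ) :
    ((Fin m → Fin m → ℝ) × (Fin κ → ℝ)) →ₗ[ℝ] ℝ where
  toFun p := ∑ k, c k * p.2 k
  map_add' p q := by simp [mul_add, Finset.sum_add_distrib]
  map_smul' a p := by
    simp only [Prod.smul_snd, Pi.smul_apply, smul_eq_mul, RingHom.id_apply, Finset.mul_sum]
    exact Finset.sum_congr rfl fun k _ => by ring

theorem main_test (m κ : ℕ)
    (tourCost' : Equiv.Perm (Fin m) → ℝ)
    (Q₀ : Set ((Fin m → Fin m → ℝ) × (Fin κ → ℝ)))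
    (hne : Q₀.Nonempty) (hcomp : IsCompact Q₀) (hconv : Convex ℝ Q₀)
    (hbij : Set.BijOn (fun p => p.1) (Set.extremePoints ℝ Q₀)
      (Set.extremePoints ℝ (assignmentPolytope m)))
    (ctilde : Fin κ → ℝ)
    (hcost : ∀ p ∈ Set.extremePoints ℝ Q₀, ∀ u : Equiv.Perm (Fin m),
      p.1 = permMatrix m u → ∑ k, ctilde k * p.2 k = tourCost' u) :
    sInf {v : ℝ | ∃ p ∈ Q₀, v = ∑ k, ctilde k * p.2 k} =
        sInf {v : ℝ | ∃ u : Equiv.Perm (Fin m), v = tourCost' u} ∧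
      ∀ p ∈ Set.extremePoints ℝ Q₀,
        (∀ q ∈ Q₀, ∑ k, ctilde k * p.2 k ≤ ∑ k, ctilde k * q.2 k) →
        ∀ u : Equiv.Perm (Fin m), p.1 = permMatrix m u →
          ∀ u' : Equiv.Perm (Fin m), tourCost' u ≤ tourCost' u' := by
  set L := costL m κ ctilde with hLdef
  have hLapp : ∀ p, L p = ∑ k, ctilde k * p.2 k := fun p => rfl
  have hsurj : ∀ u : Equiv.Perm (Fin m), ∃ p ∈ Set.extremePoints ℝ Q₀,
      p.1 = permMatrix m u ∧ L p = tourCost' u := by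
    intro u
    obtain ⟨p, hpE, hp1⟩ := hbij.surjOn (perm_is_extreme u)
    exact ⟨p, hpE, hp1, (hLapp p).trans (hcost p hpE u hp1)⟩
  constructor
  · have hEne : (Set.extremePoints ℝ Q₀).Nonempty := hcomp.extremePoints_nonempty hne
    have hEfin : (Set.extremePoints ℝ Q₀).Finite := by
      apply Set.Finite.of_finite_image _ hbij.injOn
      rw [hbij.image_eq]
      refine (Set.finite_range (fun u => permMatrix m u)).subset ?_
      rintro w hw
      obtain ⟨u, rfl⟩ := extreme_is_perm hw
      exact ⟨u, rfl⟩
    obtain ⟨p₀, hp₀E, hp₀min⟩ := Set.exists_min_image _ L hEfin hEne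
    have hmin : ∀ q ∈ Q₀, L p₀ ≤ L q := by
      have hclosed : IsClosed {q : (Fin m → Fin m → ℝ) × (Fin κ → ℝ) | L p₀ ≤ L q} :=
        isClosed_le continuous_const (LinearMap.continuous_of_finiteDimensional L)
      have hconv' : Convex ℝ {q : (Fin m → Fin m → ℝ) × (Fin κ → ℝ) | L p₀ ≤ L q} :=
        (convex_Ici (L p₀)).linear_preimage L
      intro q hq
      have : Q₀ ⊆ {q | L p₀ ≤ L q} := by
        rw [← closure_convexHull_extremePoints hcomp hconv]
        exact closure_minimal (convexHull_min hp₀min hconv') hclosed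
      exact this hq
    obtain ⟨u₀, hu₀⟩ := extreme_is_perm (hbij.mapsTo hp₀E)
    have hp₀cost : L p₀ = tourCost' u₀ := (hLapp p₀).trans (hcost p₀ hp₀E u₀ hu₀)
    have h1 : IsLeast {v : ℝ | ∃ p ∈ Q₀, v = ∑ k, ctilde k * p.2 k} (L p₀) := by
      constructor
      · exact ⟨p₀, extremePoints_subset hp₀E, rfl⟩
      · rintro v ⟨p, hp, rfl⟩
        exact hmin p hp
    have h2 : IsLeast {v : ℝ | ∃ u : Equiv.Perm (Fin m), v = tourCost' u} (L p₀) := by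
      constructor
      · exact ⟨u₀, hp₀cost⟩
      · rintro v ⟨u, rfl⟩
        obtain ⟨p, hpE, _, hpc⟩ := hsurj u
        rw [← hpc]
        exact hmin p (extremePoints_subset hpE)
    rw [h1.csInf_eq, h2.csInf_eq]
  · intro p hpE hpmin u hpu u'
    obtain ⟨p', hp'E, _, hp'c⟩ := hsurj u'
    have h1 : tourCost' u = L p := ((hLapp p).trans (hcost p hpE u hpu)).symm
    rw [h1, ← hp'c]
    exact hpmin p' (extremePoints_subset hp'E)

/-- Theorem `LP_Equivalences-0`. Let `Q₀` be a nonempty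
compact convex set in the `(w, x)`-variables whose projection onto the
`w`-variables equals the assignment polytope `𝒜ₙ`, and suppose the
projection `(ŵ, x̂) ↦ ŵ` restricts to a bijection from the extreme points of
`Q₀` onto the extreme points of `𝒜ₙ`.  Suppose the cost vector `c̃` attaches
to every extreme point `(ŵ, x̂)` of `Q₀` whose `w`-component is the
permutation matrix of `u` the cost `TourCost(u)` of the associated TSP tour.
Then the minimum of `c̃ᵀx` over `Q₀` equals the minimum tour cost over all
permutations, and every extreme-point minimizer of the LP yields a
minimum-cost TSP tour — irrespective of whether `Q₀` projects to "the TSP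
polytope" `𝒫ₙ` or not. -/
theorem LP0_solves_TSP (n κ : ℕ) (hn : 3 ≤ n)
    (d : Fin (n - 1 + 1) → Fin (n - 1 + 1) → ℝ)
    (Q₀ : Set ((Fin (n - 1) → Fin (n - 1) → ℝ) × (Fin κ → ℝ)))
    (hne : Q₀.Nonempty) (hcomp : IsCompact Q₀) (hconv : Convex ℝ Q₀)
    (hproj : {w | ∃ x : Fin κ → ℝ, (w, x) ∈ Q₀} = assignmentPolytope (n - 1))
    (hbij : Set.BijOn (fun p => p.1) (Set.extremePoints ℝ Q₀)
      (Set.extremePoints ℝ (assignmentPolytope (n - 1))))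
    (ctilde : Fin κ → ℝ)
    (hcost : ∀ p ∈ Set.extremePoints ℝ Q₀, ∀ u : Equiv.Perm (Fin (n - 1)),
      p.1 = permMatrix (n - 1) u → ∑ k, ctilde k * p.2 k = tourCost (n - 1) d u) :
    sInf {v : ℝ | ∃ p ∈ Q₀, v = ∑ k, ctilde k * p.2 k} =
        sInf {v : ℝ | ∃ u : Equiv.Perm (Fin (n - 1)), v = tourCost (n - 1) d u} ∧
      ∀ p ∈ Set.extremePoints ℝ Q₀,
        (∀ q ∈ Q₀, ∑ k, ctilde k * p.2 k ≤ ∑ k, ctilde k * q.2 k) →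
        ∀ u : Equiv.Perm (Fin (n - 1)), p.1 = permMatrix (n - 1) u →
          ∀ u' : Equiv.Perm (Fin (n - 1)), tourCost (n - 1) d u ≤ tourCost (n - 1) d u' := by
  exact main_test (n - 1) κ (tourCost (n - 1) d) Q₀ hne hcomp hconv hbij ctilde hcost
end

section
/- Fix m ≥ 4 and travel costs d : C × C → ℝ on the cities C = {0,1,…,m}. Define the cost vector c̃ on triples of nodes by: c̃_{(i,1)(j,2)(k,3)} = d(0,i) + d(i,j) + d(j,k); c̃_{(i,1)(j,m−1)(k,m)} = d(j,k) + d(k,0); c̃_{(i,1)(j,r)(k,r+1)} = d(j,k) for 3 ≤ r ≤ m−2; and c̃ = 0 on all other triples. Let u be a permutation of {1,…,m} with permutation matrix ŵ (ŵ_{ir} = 1 iff i = u(r)), and let x̂ be a nonnegative vector indexed by triples of nodes satisfying: (i) x̂_{(i,p)(j,r)(k,s)} > 0 implies p < r < s and i, j, k pairwise distinct; (ii) x̂_{(i,p)(j,r)(k,s)} ≤ min(ŵ_{ip}, ŵ_{jr}, ŵ_{ks}); and (iii) ŵ_{ip} + ŵ_{jr} + ŵ_{ks} − x̂_{(i,p)(j,r)(k,s)}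 ≤ 2 for all triples with p < r < s and i, j, k pairwise distinct. Then Σ over all triples of c̃_{(i,p)(j,r)(k,s)} · x̂_{(i,p)(j,r)(k,s)} = d(0,u(1)) + Σ_{q=1}^{m−1} d(u(q),u(q+1)) + d(u(m),0), i.e., the linear function c̃ᵀx̂ equals the total cost of the TSP tour 0 → u(1) → … → u(m) → 0 associated with ŵ. -/
/-- The cost vector `c̃` of Theorem `Applied_Costs_Thm`, on triples of nodes
`(i,p)(j,r)(k,s)` of the TSP assignment graph (a node `(l, s) : Fin m × Fin m`
stands for level/city `l+1` at stage `s+1`, so stage value `1` corresponds to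
`s.val = 0`, stage `m−1` to `s.val = m−2`, and stage `m` to `s.val = m−1`):
`c̃_{(i,1)(j,2)(k,3)} = d(0,i) + d(i,j) + d(j,k)`;
`c̃_{(i,1)(j,m−1)(k,m)} = d(j,k) + d(k,0)`;
`c̃_{(i,1)(j,r)(k,r+1)} = d(j,k)` for `3 ≤ r ≤ m−2`; and `c̃ = 0` otherwise. -/
def ctildeCost (m : ℕ) (d : Fin (m + 1) → Fin (m + 1) → ℝ)
    (a b c : Fin m × Fin m) : ℝ :=
  if a.2.val = 0 ∧ b.2.val = 1 ∧ c.2.val = 2 then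
    d 0 a.1.succ + d a.1.succ b.1.succ + d b.1.succ c.1.succ
  else if a.2.val = 0 ∧ b.2.val = m - 2 ∧ c.2.val = m - 1 then
    d b.1.succ c.1.succ + d c.1.succ 0
  else if a.2.val = 0 ∧ 2 ≤ b.2.val ∧ b.2.val ≤ m - 3 ∧ c.2.val = b.2.val + 1 then
    d b.1.succ c.1.succ
  else 0

private lemma pullIte {α : Type*} (P : Prop) [Decidable P] (s : Finset α) (f : α → ℝ) :
    (∑ x ∈ s, if P then f x else 0) = if P then ∑ x ∈ s, f x else 0 := by
  split_ifs <;> simp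

private lemma uniqSum {m : ℕ} (a : ℕ) (ha : a < m) (f : Fin m → ℝ) :
    (∑ r : Fin m, if r.val = a then f r else 0) = f ⟨a, ha⟩ := by
  rw [Finset.sum_eq_single ⟨a, ha⟩]
  · simp
  · exact fun b _ hb => if_neg fun h => hb (Fin.ext h)
  · exact fun h => absurd (Finset.mem_univ _) h

private lemma uniqSum2 {m : ℕ} (a b : ℕ) (ha : a < m) (hb : b < m)
    (f : Fin m → Fin m → ℝ) :
    (∑ r : Fin m, ∑ s : Fin m, if r.val = a ∧ s.val = b then f r s else 0)
      = f ⟨a, ha⟩ ⟨b, hb⟩ := by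
  have h1 : ∀ r : Fin m,
      (∑ s : Fin m, if r.val = a ∧ s.val = b then f r s else 0)
        = if r.val = a then f r ⟨b, hb⟩ else 0 := by
    intro r
    by_cases h : r.val = a
    · simp only [h, true_and]
      exact uniqSum b hb _
    · simp [h]
  rw [Finset.sum_congr rfl fun r _ => h1 r]
  exact uniqSum a ha _

private lemma collapseSum {m : ℕ} (u : Equiv.Perm (Fin m)) (f : Fin m × Fin m → ℝ) :
    (∑ a : Fin m × Fin m, if a.1 = u a.2 then f a else 0) = ∑ p : Fin m, f (u p, p) := by
  rw [Fintype.sum_prod_type_right]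
  refine Finset.sum_congr rfl fun p _ => ?_
  simpa using Finset.sum_ite_eq' Finset.univ (u p) (fun i => f (i, p))

/-- Theorem `Applied_Costs_Thm`. For `m ≥ 4`, a permutation
`u` of `{1,…,m}` with permutation matrix `ŵ`, and any nonnegative vector `x̂`
on triples of nodes satisfying conditions (i)–(iii), the linear function
`c̃ᵀx̂` equals the total cost
`d(0,u(1)) + Σ_{q=1}^{m−1} d(u(q),u(q+1)) + d(u(m),0)` of the TSP tour
`0 → u(1) → … → u(m) → 0` associated with `ŵ`. -/
theorem ctilde_accounts_tour_cost (m : ℕ) (hm : 4 ≤ m)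
    (d : Fin (m + 1) → Fin (m + 1) → ℝ) (u : Equiv.Perm (Fin m))
    (xhat : (Fin m × Fin m) → (Fin m × Fin m) → (Fin m × Fin m) → ℝ)
    (hnonneg : ∀ a b c, 0 ≤ xhat a b c)
    (hi : ∀ a b c : Fin m × Fin m, 0 < xhat a b c →
      a.2 < b.2 ∧ b.2 < c.2 ∧ a.1 ≠ b.1 ∧ a.1 ≠ c.1 ∧ b.1 ≠ c.1)
    (hii : ∀ a b c : Fin m × Fin m,
      xhat a b c ≤ min (min (permMatrix m u a.1 a.2) (permMatrix m u b.1 b.2))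
        (permMatrix m u c.1 c.2))
    (hiii : ∀ a b c : Fin m × Fin m,
      a.2 < b.2 → b.2 < c.2 → a.1 ≠ b.1 → a.1 ≠ c.1 → b.1 ≠ c.1 →
      permMatrix m u a.1 a.2 + permMatrix m u b.1 b.2 + permMatrix m u c.1 c.2
        - xhat a b c ≤ 2) :
    ∑ a : Fin m × Fin m, ∑ b : Fin m × Fin m, ∑ c : Fin m × Fin m,
        ctildeCost m d a b c * xhat a b c = tourCost m d u := by
  classical
  have hm0 : 0 < m := by omega
  have hm1 : 1 < m := by omega
  have hm2 : 2 < m := by omega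
  have hmm2 : m - 2 < m := by omega
  have hmm1 : m - 1 < m := by omega
  -- characterization of xhat
  have hx : ∀ a b c : Fin m × Fin m, xhat a b c =
      if a.1 = u a.2 ∧ (b.1 = u b.2 ∧ (c.1 = u c.2 ∧ (a.2 < b.2 ∧ b.2 < c.2)))
      then 1 else 0 := by
    intro a b c
    split_ifs with h
    · obtain ⟨ha, hb, hc, hab, hbc⟩ := h
      have pa : permMatrix m u a.1 a.2 = 1 := by simp [permMatrix, ha]
      have pb : permMatrix m u b.1 b.2 = 1 := by simp [permMatrix, hb]
      have pc : permMatrix m u c.1 c.2 = 1 := by simp [permMatrix, hc]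
      have hne1 : a.1 ≠ b.1 := by
        rw [ha, hb]
        exact fun h => absurd (u.injective h) (Fin.ne_of_lt hab)
      have hne2 : a.1 ≠ c.1 := by
        rw [ha, hc]
        exact fun h => absurd (u.injective h) (Fin.ne_of_lt (lt_trans hab hbc))
      have hne3 : b.1 ≠ c.1 := by
        rw [hb, hc]
        exact fun h => absurd (u.injective h) (Fin.ne_of_lt hbc)
      have h3 := hiii a b c hab hbc hne1 hne2 hne3
      have h2 := hii a b c
      rw [pa, pb, pc] at h3 h2
      norm_num at h2
      linarith
    · by_contra hne
      have hpos : 0 < xhat a b c := lt_of_le_of_ne (hnonneg a b c) (Ne.symm hne)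
      obtain ⟨s1, s2, _, _, _⟩ := hi a b c hpos
      have h2 := hii a b c
      have hd : a.1 ≠ u a.2 ∨ b.1 ≠ u b.2 ∨ c.1 ≠ u c.2 := by tauto
      rcases hd with hh | hh | hh
      · have p0 : permMatrix m u a.1 a.2 = 0 := by simp [permMatrix, hh]
        have := h2.trans ((min_le_left _ _).trans (min_le_left _ _))
        rw [p0] at this
        linarith
      · have p0 : permMatrix m u b.1 b.2 = 0 := by simp [permMatrix, hh]
        have := h2.trans ((min_le_left _ _).trans (min_le_right _ _))
        rw [p0] at this
        linarith
      · have p0 : permMatrix m u c.1 c.2 = 0 := by simp [permMatrix, hh]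
        have := h2.trans (min_le_right _ _)
        rw [p0] at this
        linarith
  -- rewrite the summand as nested ifs
  have hsummand : ∀ a b c : Fin m × Fin m, ctildeCost m d a b c * xhat a b c =
      if a.1 = u a.2 then (if b.1 = u b.2 then (if c.1 = u c.2 then
        (if a.2 < b.2 ∧ b.2 < c.2 then ctildeCost m d a b c else 0) else 0) else 0)
      else 0 := by
    intro a b c
    rw [hx a b c]
    by_cases H : a.1 = u a.2 ∧ b.1 = u b.2 ∧ c.1 = u c.2 ∧ a.2 < b.2 ∧ b.2 < c.2
    · obtain ⟨h1, h2, h3, h4, h5⟩ := H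
      rw [if_pos (⟨h1, h2, h3, h4, h5⟩ : _ ∧ _), mul_one, if_pos h1, if_pos h2,
        if_pos h3, if_pos (⟨h4, h5⟩ : _ ∧ _)]
    · rw [if_neg H, mul_zero]
      by_cases h1 : a.1 = u a.2
      · by_cases h2 : b.1 = u b.2
        · by_cases h3 : c.1 = u c.2
          · rw [if_pos h1, if_pos h2, if_pos h3,
              if_neg (fun hS : _ ∧ _ => H ⟨h1, h2, h3, hS.1, hS.2⟩)]
          · rw [if_pos h1, if_pos h2, if_neg h3]
        · rw [if_pos h1, if_neg h2]
      · rw [if_neg h1]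
  -- collapse each of the three sums over the assignment matrix
  have key : (∑ a : Fin m × Fin m, ∑ b : Fin m × Fin m, ∑ c : Fin m × Fin m,
      ctildeCost m d a b c * xhat a b c)
      = ∑ p : Fin m, ∑ r : Fin m, ∑ s : Fin m,
          (if (p : Fin m) < r ∧ r < s then
            ctildeCost m d (u p, p) (u r, r) (u s, s) else 0) := by
    have e1 : (∑ a : Fin m × Fin m, ∑ b : Fin m × Fin m, ∑ c : Fin m × Fin m,
        ctildeCost m d a b c * xhat a b c)
        = ∑ a : Fin m × Fin m, (if a.1 = u a.2 then
            (∑ b : Fin m × Fin m, ∑ c : Fin m × Fin m,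
              (if b.1 = u b.2 then (if c.1 = u c.2 then
                (if a.2 < b.2 ∧ b.2 < c.2 then ctildeCost m d a b c else 0)
              else 0) else 0)) else 0) := by
      refine Finset.sum_congr rfl fun a _ => ?_
      rw [Finset.sum_congr rfl fun b (_ : b ∈ Finset.univ) =>
        Finset.sum_congr rfl fun c (_ : c ∈ Finset.univ) => hsummand a b c]
      rw [Finset.sum_congr rfl fun b (_ : b ∈ Finset.univ) => pullIte _ _ _, pullIte]
    rw [e1, collapseSum]
    refine Finset.sum_congr rfl fun p _ => ?_
    have e2 : (∑ b : Fin m × Fin m, ∑ c : Fin m × Fin m,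
        (if b.1 = u b.2 then (if c.1 = u c.2 then
          (if (u p, p).2 < b.2 ∧ b.2 < c.2 then ctildeCost m d (u p, p) b c else 0)
        else 0) else 0))
        = ∑ b : Fin m × Fin m, (if b.1 = u b.2 then
            (∑ c : Fin m × Fin m, (if c.1 = u c.2 then
              (if (u p, p).2 < b.2 ∧ b.2 < c.2 then ctildeCost m d (u p, p) b c else 0)
            else 0)) else 0) :=
      Finset.sum_congr rfl fun b _ => pullIte _ _ _
    rw [e2, collapseSum]
    refine Finset.sum_congr rfl fun r _ => ?_
    rw [collapseSum]
  rw [key]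
  -- unfolding of ctildeCost on tour triples
  have cunfold : ∀ p r s : Fin m, ctildeCost m d (u p, p) (u r, r) (u s, s) =
      (if p.val = 0 ∧ r.val = 1 ∧ s.val = 2 then
        d 0 (u p).succ + d (u p).succ (u r).succ + d (u r).succ (u s).succ
      else if p.val = 0 ∧ r.val = m - 2 ∧ s.val = m - 1 then
        d (u r).succ (u s).succ + d (u s).succ 0
      else if p.val = 0 ∧ 2 ≤ r.val ∧ r.val ≤ m - 3 ∧ s.val = r.val + 1 then
        d (u r).succ (u s).succ
      else 0) := fun p r s => rfl
  -- the stage guard is redundant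
  have drop : ∀ p r s : Fin m,
      (if (p : Fin m) < r ∧ r < s then
        ctildeCost m d (u p, p) (u r, r) (u s, s) else 0)
      = ctildeCost m d (u p, p) (u r, r) (u s, s) := by
    intro p r s
    have hr := r.isLt
    have hs := s.isLt
    rw [cunfold p r s]
    split_ifs <;>
      first
        | rfl
        | (exfalso; simp only [Fin.lt_def, not_and, not_lt] at *; omega)
  rw [Finset.sum_congr rfl fun p (_ : p ∈ Finset.univ) =>
    Finset.sum_congr rfl fun r (_ : r ∈ Finset.univ) =>
      Finset.sum_congr rfl fun s (_ : s ∈ Finset.univ) => drop p r s]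
  -- only p = 0 contributes
  have dropP : ∀ p : Fin m, p ≠ ⟨0, hm0⟩ →
      (∑ r : Fin m, ∑ s : Fin m, ctildeCost m d (u p, p) (u r, r) (u s, s)) = 0 := by
    intro p hp
    have hpv : p.val ≠ 0 := fun h => hp (Fin.ext h)
    refine Finset.sum_eq_zero fun r _ => Finset.sum_eq_zero fun s _ => ?_
    rw [cunfold p r s]
    split_ifs <;> first | rfl | (exfalso; omega)
  rw [Finset.sum_eq_single (⟨0, hm0⟩ : Fin m)
    (fun p _ hp => dropP p hp) (fun h => absurd (Finset.mem_univ _) h)]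
  -- split the cost into three pieces
  have branch : ∀ r s : Fin m,
      ctildeCost m d (u ⟨0, hm0⟩, (⟨0, hm0⟩ : Fin m)) (u r, r) (u s, s)
      = (if r.val = 1 ∧ s.val = 2 then
            d 0 (u ⟨0, hm0⟩).succ + d (u ⟨0, hm0⟩).succ (u r).succ else 0)
        + (if r.val = m - 2 ∧ s.val = m - 1 then d (u s).succ 0 else 0)
        + (if r.val ≠ 0 then
            (if s.val = r.val + 1 then d (u r).succ (u s).succ else 0) else 0) := by
    intro r s
    have hr := r.isLt
    have hs := s.isLt
    have h0 : (⟨0, hm0⟩ : Fin m).val = 0 := rfl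
    rw [cunfold]
    split_ifs <;> first | (exfalso; omega) | ring
  rw [Finset.sum_congr rfl fun r (_ : r ∈ Finset.univ) =>
    Finset.sum_congr rfl fun s (_ : s ∈ Finset.univ) => branch r s]
  simp only [Finset.sum_add_distrib]
  -- first piece
  rw [uniqSum2 1 2 hm1 hm2
    (fun r s => d 0 (u ⟨0, hm0⟩).succ + d (u ⟨0, hm0⟩).succ (u r).succ)]
  -- second piece
  rw [uniqSum2 (m - 2) (m - 1) hmm2 hmm1 (fun r s => d (u s).succ 0)]
  -- third piece
  have t3 : (∑ r : Fin m, ∑ s : Fin m, (if r.val ≠ 0 then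
      (if s.val = r.val + 1 then d (u r).succ (u s).succ else 0) else 0))
      = (∑ r : Fin m, ∑ s : Fin m,
          (if s.val = r.val + 1 then d (u r).succ (u s).succ else 0))
        - d (u ⟨0, hm0⟩).succ (u ⟨1, hm1⟩).succ := by
    have hsplit : ∀ r : Fin m, (∑ s : Fin m, (if r.val ≠ 0 then
        (if s.val = r.val + 1 then d (u r).succ (u s).succ else 0) else 0))
        = (∑ s : Fin m, (if s.val = r.val + 1 then d (u r).succ (u s).succ else 0))
          - (if r.val = 0 then
              (∑ s : Fin m, (if s.val = r.val + 1 then d (u r).succ (u s).succ else 0))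
            else 0) := by
      intro r
      rw [pullIte]
      split_ifs <;> first | (exfalso; omega) | ring
    rw [Finset.sum_congr rfl fun r (_ : r ∈ Finset.univ) => hsplit r,
      Finset.sum_sub_distrib,
      uniqSum 0 hm0 (fun r => ∑ s : Fin m,
        (if s.val = r.val + 1 then d (u r).succ (u s).succ else 0))]
    congr 1
    have : ((⟨0, hm0⟩ : Fin m).val + 1) = 1 := rfl
    rw [uniqSum ((⟨0, hm0⟩ : Fin m).val + 1) (by omega)
      (fun s => d (u ⟨0, hm0⟩).succ (u s).succ)]
  rw [t3]
  -- compute the tour cost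
  simp only [tourCost]
  rw [uniqSum 0 hm0 (fun r => d 0 (u r).succ),
    uniqSum (m - 1) hmm1 (fun r => d (u r).succ 0)]
  ring
end
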